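/- arXiv:math/0610851 — 3 statements merged into one kernel-verified Lean document; each statement's English description precedes it below -/
import Mathlib

section
/- For every pair (e₁,e₂) ∈ ℂ², the bracket defined on the basis {Vₙ}_{n∈ℤ} by the structure equations of the genus-one Krichever–Novikov vector field family is antisymmetric and satisfies the Jacobi identity, i.e. L^(e₁,e₂) is a Lie algebra over ℂ. -/
/-!
STATEMENT 0: For every pair (e₁,e₂) ∈ ℂ², the bracket defined on the basis
{Vₙ}_{n∈ℤ} by the structure equations of the genus-one Krichever–Novikov
vector field family is antisymmetric and satisfies the Jacobi identity,
i.e. L^(e₁,e₂) is a Lie algebra over ℂ.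

We model the ℂ-vector space with basis {Vₙ}_{n∈ℤ} as `ℤ →₀ ℂ`, with
Vₙ = `Finsupp.single n 1`.
-/

open scoped Classical

/-- The bracket `[Vₙ,Vₘ]` in the case `n` odd, `m` even:
`(m−n)Vₙ₊ₘ + (m−n−1)·3e₁Vₙ₊ₘ₋₂ + (m−n−2)(e₁−e₂)(e₁−e₃)Vₙ₊ₘ₋₄`,
where `e₃ = −(e₁+e₂)`. -/
noncomputable def VbrOE (e₁ e₂ : ℂ) (n m : ℤ) : ℤ →₀ ℂ :=
  ((m - n : ℤ) : ℂ) • Finsupp.single (n + m) 1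
    + (((m - n - 1 : ℤ) : ℂ) * (3 * e₁)) • Finsupp.single (n + m - 2) 1
    + (((m - n - 2 : ℤ) : ℂ) * ((e₁ - e₂) * (e₁ - (-(e₁ + e₂))))) •
        Finsupp.single (n + m - 4) 1

/-- The bracket `[Vₙ,Vₘ]` of the family `L^(e₁,e₂)` on basis elements. -/
noncomputable def Vbr (e₁ e₂ : ℂ) (n m : ℤ) : ℤ →₀ ℂ :=
  if Odd n then
    if Odd m then
      ((m - n : ℤ) : ℂ) • Finsupp.single (n + m) 1
    else VbrOE e₁ e₂ n m
  else
    if Odd m then - VbrOE e₁ e₂ m n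
    else
      ((m - n : ℤ) : ℂ) •
        (Finsupp.single (n + m) 1 + (3 * e₁) • Finsupp.single (n + m - 2) 1
          + ((e₁ - e₂) * (e₁ - (-(e₁ + e₂)))) • Finsupp.single (n + m - 4) 1)

/-- The bilinear extension of the bracket to all of `L^(e₁,e₂)`. -/
noncomputable def Lbr (e₁ e₂ : ℂ) (f g : ℤ →₀ ℂ) : ℤ →₀ ℂ :=
  f.sum fun n a => g.sum fun m b => (a * b) • Vbr e₁ e₂ n m

section KNaux
variable (e₁ e₂ : ℂ)

local notation "S" j => (Finsupp.single j (1:ℂ) : ℤ →₀ ℂ)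
local notation "D" => ((e₁ - e₂) * (e₁ - (-(e₁ + e₂))))

theorem Vbr_oo {n m : ℤ} (hn : Odd n) (hm : Odd m) :
    Vbr e₁ e₂ n m = ((m - n : ℤ) : ℂ) • (S (n+m)) := by
  simp [Vbr, hn, hm]

theorem Vbr_oe {n m : ℤ} (hn : Odd n) (hm : Even m) :
    Vbr e₁ e₂ n m = ((m - n : ℤ) : ℂ) • (S (n+m))
      + (((m - n - 1 : ℤ) : ℂ) * (3 * e₁)) • (S (n+m-2))
      + (((m - n - 2 : ℤ) : ℂ) * D) • (S (n+m-4)) := by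
  simp [Vbr, VbrOE, hn, Int.not_odd_iff_even.mpr hm]

theorem Vbr_eo {n m : ℤ} (hn : Even n) (hm : Odd m) :
    Vbr e₁ e₂ n m = ((m - n : ℤ) : ℂ) • (S (n+m))
      + (((m - n + 1 : ℤ) : ℂ) * (3 * e₁)) • (S (n+m-2))
      + (((m - n + 2 : ℤ) : ℂ) * D) • (S (n+m-4)) := by
  simp only [Vbr, VbrOE, Int.not_odd_iff_even.mpr hn, if_false, hm, if_true]
  ring_nf
  match_scalars <;> push_cast <;> ring

theorem Vbr_ee {n m : ℤ} (hn : Even n) (hm : Even m) :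
    Vbr e₁ e₂ n m = ((m - n : ℤ) : ℂ) • (S (n+m))
      + (((m - n : ℤ) : ℂ) * (3 * e₁)) • (S (n+m-2))
      + (((m - n : ℤ) : ℂ) * D) • (S (n+m-4)) := by
  simp only [Vbr, Int.not_odd_iff_even.mpr hn, if_false, Int.not_odd_iff_even.mpr hm, if_true]
  ring_nf
  match_scalars <;> push_cast <;> ring
end KNaux

section KNaux2
variable (e₁ e₂ : ℂ)

theorem Lbr_ss (n m : ℤ) (a b : ℂ) :
    Lbr e₁ e₂ (Finsupp.single n a) (Finsupp.single m b) = (a*b) • Vbr e₁ e₂ n m := by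
  unfold Lbr
  rw [Finsupp.sum_single_index, Finsupp.sum_single_index]
  · simp only [mul_zero, zero_smul]
  · simp only [zero_mul, zero_smul, Finsupp.sum_fun_zero]

theorem Lbr_addl (f f' g : ℤ →₀ ℂ) :
    Lbr e₁ e₂ (f + f') g = Lbr e₁ e₂ f g + Lbr e₁ e₂ f' g := by
  unfold Lbr
  apply Finsupp.sum_add_index' <;> intros <;>
    simp only [zero_mul, zero_smul, Finsupp.sum_fun_zero, add_mul, add_smul, Finsupp.sum_add]

theorem Lbr_addr (f g g' : ℤ →₀ ℂ) :
    Lbr e₁ e₂ f (g + g') = Lbr e₁ e₂ f g + Lbr e₁ e₂ f g' := by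
  unfold Lbr
  rw [← Finsupp.sum_add]
  apply Finsupp.sum_congr
  intro n _
  apply Finsupp.sum_add_index' <;> intros <;>
    simp only [mul_zero, zero_smul, mul_add, add_smul]

theorem Lbr_smull (c : ℂ) (f g : ℤ →₀ ℂ) :
    Lbr e₁ e₂ (c • f) g = c • Lbr e₁ e₂ f g := by
  unfold Lbr
  rw [Finsupp.sum_smul_index', Finsupp.smul_sum]
  · apply Finsupp.sum_congr; intro n _
    rw [Finsupp.smul_sum]
    apply Finsupp.sum_congr; intro m _
    simp only [smul_smul, smul_eq_mul]; ring_nf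
  · intro i; simp only [zero_mul, zero_smul, Finsupp.sum_fun_zero]

theorem Lbr_smulr (c : ℂ) (f g : ℤ →₀ ℂ) :
    Lbr e₁ e₂ f (c • g) = c • Lbr e₁ e₂ f g := by
  unfold Lbr
  rw [Finsupp.smul_sum]
  apply Finsupp.sum_congr; intro n _
  rw [Finsupp.sum_smul_index', Finsupp.smul_sum]
  · apply Finsupp.sum_congr; intro m _
    simp only [smul_smul, smul_eq_mul]; ring_nf
  · intro i; simp only [mul_zero, zero_smul]

theorem Lbr_zerol (g : ℤ →₀ ℂ) : Lbr e₁ e₂ 0 g = 0 := by simp [Lbr]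
theorem Lbr_zeror (f : ℤ →₀ ℂ) : Lbr e₁ e₂ f 0 = 0 := by simp [Lbr]

theorem Vbr_antisymm (n m : ℤ) : Vbr e₁ e₂ n m = - Vbr e₁ e₂ m n := by
  rcases Int.even_or_odd n with hn | hn <;> rcases Int.even_or_odd m with hm | hm
  · rw [Vbr_ee e₁ e₂ hn hm, Vbr_ee e₁ e₂ hm hn]
    ring_nf; match_scalars <;> push_cast <;> ring
  · rw [Vbr_eo e₁ e₂ hn hm, Vbr_oe e₁ e₂ hm hn]
    ring_nf; match_scalars <;> push_cast <;> ring
  · rw [Vbr_oe e₁ e₂ hn hm, Vbr_eo e₁ e₂ hm hn]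
    ring_nf; match_scalars <;> push_cast <;> ring
  · rw [Vbr_oo e₁ e₂ hn hm, Vbr_oo e₁ e₂ hm hn]
    ring_nf; match_scalars <;> push_cast <;> ring

theorem Lbr_antisymm (f g : ℤ →₀ ℂ) : Lbr e₁ e₂ f g = - Lbr e₁ e₂ g f := by
  have h : Lbr e₁ e₂ f g + Lbr e₁ e₂ g f = 0 := by
    unfold Lbr
    rw [Finsupp.sum_comm g f, ← Finsupp.sum_add]
    refine Eq.trans (Finsupp.sum_congr fun n _ => ?_) (Finsupp.sum_fun_zero _)
    rw [← Finsupp.sum_add]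
    refine Eq.trans (Finsupp.sum_congr fun m _ => ?_) (Finsupp.sum_fun_zero _)
    rw [Vbr_antisymm e₁ e₂ m n]
    rw [smul_neg, mul_comm, add_neg_cancel]
  exact eq_neg_of_add_eq_zero_left h
end KNaux2
section KNaux3
variable (e₁ e₂ : ℂ)

theorem Lbr1 (α : ℂ) (p k : ℤ) :
    Lbr e₁ e₂ (α • Finsupp.single p 1) (Finsupp.single k 1) = α • Vbr e₁ e₂ p k := by
  rw [Lbr_smull, Lbr_ss, one_mul, one_smul]

theorem Lbr3 (α β γ : ℂ) (p q r k : ℤ) :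
    Lbr e₁ e₂ (α • Finsupp.single p 1 + β • Finsupp.single q 1 + γ • Finsupp.single r 1)
      (Finsupp.single k 1)
      = α • Vbr e₁ e₂ p k + β • Vbr e₁ e₂ q k + γ • Vbr e₁ e₂ r k := by
  rw [Lbr_addl, Lbr_addl, Lbr1, Lbr1, Lbr1]

theorem jacV_ooo {n m k : ℤ} (hn : Odd n) (hm : Odd m) (hk : Odd k) :
    Lbr e₁ e₂ (Vbr e₁ e₂ n m) (Finsupp.single k 1)
      + Lbr e₁ e₂ (Vbr e₁ e₂ m k) (Finsupp.single n 1)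
      + Lbr e₁ e₂ (Vbr e₁ e₂ k n) (Finsupp.single m 1) = 0 := by
  rw [Vbr_oo e₁ e₂ hn hm, Vbr_oo e₁ e₂ hm hk, Vbr_oo e₁ e₂ hk hn, Lbr1, Lbr1, Lbr1,
    Vbr_eo e₁ e₂ (hn.add_odd hm) hk, Vbr_eo e₁ e₂ (hm.add_odd hk) hn,
    Vbr_eo e₁ e₂ (hk.add_odd hn) hm]
  ring_nf
  match_scalars <;> push_cast <;> ring

theorem jacV_eee {n m k : ℤ} (hn : Even n) (hm : Even m) (hk : Even k) :
    Lbr e₁ e₂ (Vbr e₁ e₂ n m) (Finsupp.single k 1)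
      + Lbr e₁ e₂ (Vbr e₁ e₂ m k) (Finsupp.single n 1)
      + Lbr e₁ e₂ (Vbr e₁ e₂ k n) (Finsupp.single m 1) = 0 := by
  have h2 : Even (2:ℤ) := ⟨1, rfl⟩
  have h4 : Even (4:ℤ) := ⟨2, rfl⟩
  have hnm : Even (n + m) := hn.add hm
  have hmk : Even (m + k) := hm.add hk
  have hkn : Even (k + n) := hk.add hn
  rw [Vbr_ee e₁ e₂ hn hm, Vbr_ee e₁ e₂ hm hk, Vbr_ee e₁ e₂ hk hn, Lbr3, Lbr3, Lbr3,
    Vbr_ee e₁ e₂ hnm hk, Vbr_ee e₁ e₂ (hnm.sub h2) hk, Vbr_ee e₁ e₂ (hnm.sub h4) hk,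
    Vbr_ee e₁ e₂ hmk hn, Vbr_ee e₁ e₂ (hmk.sub h2) hn, Vbr_ee e₁ e₂ (hmk.sub h4) hn,
    Vbr_ee e₁ e₂ hkn hm, Vbr_ee e₁ e₂ (hkn.sub h2) hm, Vbr_ee e₁ e₂ (hkn.sub h4) hm]
  ring_nf
  match_scalars <;> push_cast <;> ring
end KNaux3

section KNaux4
variable (e₁ e₂ : ℂ)

theorem jacV_ooe {n m k : ℤ} (hn : Odd n) (hm : Odd m) (hk : Even k) :
    Lbr e₁ e₂ (Vbr e₁ e₂ n m) (Finsupp.single k 1)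
      + Lbr e₁ e₂ (Vbr e₁ e₂ m k) (Finsupp.single n 1)
      + Lbr e₁ e₂ (Vbr e₁ e₂ k n) (Finsupp.single m 1) = 0 := by
  have h2 : Even (2:ℤ) := ⟨1, rfl⟩
  have h4 : Even (4:ℤ) := ⟨2, rfl⟩
  have hnm : Even (n + m) := hn.add_odd hm
  have hmk : Odd (m + k) := hm.add_even hk
  have hkn : Odd (k + n) := hk.add_odd hn
  rw [Vbr_oo e₁ e₂ hn hm, Vbr_oe e₁ e₂ hm hk, Vbr_eo e₁ e₂ hk hn, Lbr1, Lbr3, Lbr3,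
    Vbr_ee e₁ e₂ hnm hk,
    Vbr_oo e₁ e₂ hmk hn, Vbr_oo e₁ e₂ (hmk.sub_even h2) hn, Vbr_oo e₁ e₂ (hmk.sub_even h4) hn,
    Vbr_oo e₁ e₂ hkn hm, Vbr_oo e₁ e₂ (hkn.sub_even h2) hm, Vbr_oo e₁ e₂ (hkn.sub_even h4) hm]
  ring_nf
  match_scalars <;> push_cast <;> ring

theorem jacV_oee {n m k : ℤ} (hn : Odd n) (hm : Even m) (hk : Even k) :
    Lbr e₁ e₂ (Vbr e₁ e₂ n m) (Finsupp.single k 1)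
      + Lbr e₁ e₂ (Vbr e₁ e₂ m k) (Finsupp.single n 1)
      + Lbr e₁ e₂ (Vbr e₁ e₂ k n) (Finsupp.single m 1) = 0 := by
  have h2 : Even (2:ℤ) := ⟨1, rfl⟩
  have h4 : Even (4:ℤ) := ⟨2, rfl⟩
  have hnm : Odd (n + m) := hn.add_even hm
  have hmk : Even (m + k) := hm.add hk
  have hkn : Odd (k + n) := hk.add_odd hn
  rw [Vbr_oe e₁ e₂ hn hm, Vbr_ee e₁ e₂ hm hk, Vbr_eo e₁ e₂ hk hn, Lbr3, Lbr3, Lbr3,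
    Vbr_oe e₁ e₂ hnm hk, Vbr_oe e₁ e₂ (hnm.sub_even h2) hk, Vbr_oe e₁ e₂ (hnm.sub_even h4) hk,
    Vbr_eo e₁ e₂ hmk hn, Vbr_eo e₁ e₂ (hmk.sub h2) hn, Vbr_eo e₁ e₂ (hmk.sub h4) hn,
    Vbr_oe e₁ e₂ hkn hm, Vbr_oe e₁ e₂ (hkn.sub_even h2) hm, Vbr_oe e₁ e₂ (hkn.sub_even h4) hm]
  ring_nf
  match_scalars <;> push_cast <;> ring

theorem jacV_rot (n m k : ℤ) :
    Lbr e₁ e₂ (Vbr e₁ e₂ n m) (Finsupp.single k 1)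
      + Lbr e₁ e₂ (Vbr e₁ e₂ m k) (Finsupp.single n 1)
      + Lbr e₁ e₂ (Vbr e₁ e₂ k n) (Finsupp.single m 1)
    = Lbr e₁ e₂ (Vbr e₁ e₂ m k) (Finsupp.single n 1)
      + Lbr e₁ e₂ (Vbr e₁ e₂ k n) (Finsupp.single m 1)
      + Lbr e₁ e₂ (Vbr e₁ e₂ n m) (Finsupp.single k 1) := by
  abel

theorem jacV (n m k : ℤ) :
    Lbr e₁ e₂ (Vbr e₁ e₂ n m) (Finsupp.single k 1)
      + Lbr e₁ e₂ (Vbr e₁ e₂ m k) (Finsupp.single n 1)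
      + Lbr e₁ e₂ (Vbr e₁ e₂ k n) (Finsupp.single m 1) = 0 := by
  rcases Int.even_or_odd n with hn | hn <;> rcases Int.even_or_odd m with hm | hm <;>
    rcases Int.even_or_odd k with hk | hk
  · exact jacV_eee e₁ e₂ hn hm hk
  · rw [jacV_rot, jacV_rot]; exact jacV_oee e₁ e₂ hk hn hm
  · rw [jacV_rot]; exact jacV_oee e₁ e₂ hm hk hn
  · rw [jacV_rot]; exact jacV_ooe e₁ e₂ hm hk hn
  · exact jacV_oee e₁ e₂ hn hm hk
  · rw [jacV_rot, jacV_rot]; exact jacV_ooe e₁ e₂ hk hn hm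
  · exact jacV_ooe e₁ e₂ hn hm hk
  · exact jacV_ooo e₁ e₂ hn hm hk
end KNaux4

private theorem add3_zero {M : Type*} [AddCommGroup M] {a b c a' b' c' : M}
    (h : a + b + c = 0) (h' : a' + b' + c' = 0) :
    (a + a') + (b + b') + (c + c') = 0 := by
  have : (a + a') + (b + b') + (c + c') = (a + b + c) + (a' + b' + c') := by abel
  rw [this, h, h', add_zero]


/-- The bracket of `L^(e₁,e₂)` is antisymmetric and satisfies the Jacobi
identity, i.e. `L^(e₁,e₂)` is a complex Lie algebra, for every `(e₁,e₂) ∈ ℂ²`. -/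
theorem Lbr_antisymm_and_jacobi (e₁ e₂ : ℂ) :
    (∀ f g : ℤ →₀ ℂ, Lbr e₁ e₂ f g = - Lbr e₁ e₂ g f) ∧
    (∀ f g h : ℤ →₀ ℂ,
      Lbr e₁ e₂ (Lbr e₁ e₂ f g) h + Lbr e₁ e₂ (Lbr e₁ e₂ g h) f
        + Lbr e₁ e₂ (Lbr e₁ e₂ h f) g = 0) := by
  constructor
  · exact Lbr_antisymm e₁ e₂
  · intro f g h
    induction f using Finsupp.induction_linear with
    | zero => simp only [Lbr_zerol, Lbr_zeror, zero_add, add_zero]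
    | add f f' hf hf' =>
      simp only [Lbr_addl, Lbr_addr]
      exact add3_zero hf hf'
    | single n a =>
      induction g using Finsupp.induction_linear with
      | zero => simp only [Lbr_zerol, Lbr_zeror, zero_add, add_zero]
      | add g g' hg hg' =>
        simp only [Lbr_addl, Lbr_addr]
        exact add3_zero hg hg'
      | single m b =>
        induction h using Finsupp.induction_linear with
        | zero => simp only [Lbr_zerol, Lbr_zeror, zero_add, add_zero]
        | add h h' hh hh' =>
          simp only [Lbr_addl, Lbr_addr]
          exact add3_zero hh hh'
        | single k c =>
          have s1 : (Finsupp.single n a : ℤ →₀ ℂ) = a • Finsupp.single n 1 := by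
            rw [Finsupp.smul_single', mul_one]
          have s2 : (Finsupp.single m b : ℤ →₀ ℂ) = b • Finsupp.single m 1 := by
            rw [Finsupp.smul_single', mul_one]
          have s3 : (Finsupp.single k c : ℤ →₀ ℂ) = c • Finsupp.single k 1 := by
            rw [Finsupp.smul_single', mul_one]
          rw [Lbr_ss, Lbr_ss, Lbr_ss, Lbr_smull, Lbr_smull, Lbr_smull, s1, s2, s3,
            Lbr_smulr, Lbr_smulr, Lbr_smulr]
          have h0 := jacV e₁ e₂ n m k
          calc (a * b) • c • Lbr e₁ e₂ (Vbr e₁ e₂ n m) (Finsupp.single k 1)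
                + (b * c) • a • Lbr e₁ e₂ (Vbr e₁ e₂ m k) (Finsupp.single n 1)
                + (c * a) • b • Lbr e₁ e₂ (Vbr e₁ e₂ k n) (Finsupp.single m 1)
              = (a * b * c) • (Lbr e₁ e₂ (Vbr e₁ e₂ n m) (Finsupp.single k 1)
                + Lbr e₁ e₂ (Vbr e₁ e₂ m k) (Finsupp.single n 1)
                + Lbr e₁ e₂ (Vbr e₁ e₂ k n) (Finsupp.single m 1)) := by
                match_scalars <;> ring
            _ = 0 := by rw [h0, smul_zero]
end

section
/- For every (e₁,e₂) ∈ ℂ² with (e₁,e₂) ≠ (0,0), the Lie algebra L^(e₁,e₂) is not isomorphic (as a complex Lie algebra) to the Witt algebra W. -/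
open scoped Classical

/-- The Witt algebra bracket, on the ℂ-vector space with basis
`{lₙ}_{n∈ℤ}` (with `lₙ = Finsupp.single n 1`): `[lₙ,lₘ] = (m−n)lₙ₊ₘ`,
extended bilinearly. -/
noncomputable def Wbr (f g : ℤ →₀ ℂ) : ℤ →₀ ℂ :=
  f.sum fun n a => g.sum fun m b =>
    (a * b) • (((m - n : ℤ) : ℂ) • Finsupp.single (n + m) 1)

noncomputable section

namespace LW

def kk2 (n m : ℤ) : ℤ :=
  if Odd n then (if Odd m then 0 else m - n - 1)
  else (if Odd m then m - n + 1 else m - n)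

def kk4 (n m : ℤ) : ℤ :=
  if Odd n then (if Odd m then 0 else m - n - 2)
  else (if Odd m then m - n + 2 else m - n)

def K2 (e₁ : ℂ) (n m : ℤ) : ℂ := (3 * e₁) * (kk2 n m : ℂ)
def K4 (e₁ e₂ : ℂ) (n m : ℤ) : ℂ := ((e₁ - e₂) * (e₁ - (-(e₁ + e₂)))) * (kk4 n m : ℂ)

/-- max degree, with junk value for 0 -/
def dg (f : ℤ →₀ ℂ) : ℤ :=
  if h : f = 0 then 0 else f.support.max' (Finsupp.support_nonempty_iff.mpr h)

/-- min degree, with junk value for 0 -/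
def bg (f : ℤ →₀ ℂ) : ℤ :=
  if h : f = 0 then 0 else f.support.min' (Finsupp.support_nonempty_iff.mpr h)

lemma dg_apply_ne {f : ℤ →₀ ℂ} (h : f ≠ 0) : f (dg f) ≠ 0 := by
  rw [dg, dif_neg h]
  have := Finset.max'_mem f.support (Finsupp.support_nonempty_iff.mpr h)
  exact Finsupp.mem_support_iff.mp this

lemma bg_apply_ne {f : ℤ →₀ ℂ} (h : f ≠ 0) : f (bg f) ≠ 0 := by
  rw [bg, dif_neg h]
  have := Finset.min'_mem f.support (Finsupp.support_nonempty_iff.mpr h)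
  exact Finsupp.mem_support_iff.mp this

lemma apply_eq_zero_of_dg_lt {f : ℤ →₀ ℂ} {k : ℤ} (h : dg f < k) : f k = 0 := by
  by_cases hf : f = 0
  · simp [hf]
  by_contra hk
  rw [dg, dif_neg hf] at h
  exact absurd (Finset.le_max' _ _ (Finsupp.mem_support_iff.mpr hk)) (not_le.mpr h)

lemma apply_eq_zero_of_lt_bg {f : ℤ →₀ ℂ} {k : ℤ} (h : k < bg f) : f k = 0 := by
  by_cases hf : f = 0
  · simp [hf]
  by_contra hk
  rw [bg, dif_neg hf] at h
  exact absurd (Finset.min'_le _ _ (Finsupp.mem_support_iff.mpr hk)) (not_le.mpr h)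

lemma le_dg {f : ℤ →₀ ℂ} {k : ℤ} (h : f k ≠ 0) : k ≤ dg f := by
  by_contra hk
  exact h (apply_eq_zero_of_dg_lt (not_le.mp hk))

lemma bg_le {f : ℤ →₀ ℂ} {k : ℤ} (h : f k ≠ 0) : bg f ≤ k := by
  by_contra hk
  exact h (apply_eq_zero_of_lt_bg (not_le.mp hk))

lemma bg_le_dg {f : ℤ →₀ ℂ} (h : f ≠ 0) : bg f ≤ dg f := bg_le (dg_apply_ne h)

lemma bg_eq_of {f : ℤ →₀ ℂ} {j : ℤ} (h1 : f j ≠ 0) (h2 : ∀ i, i < j → f i = 0) :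
    bg f = j := by
  have h3 := bg_le h1
  rcases lt_or_eq_of_le h3 with h4 | h4
  · have hf : f ≠ 0 := fun hf => h1 (by simp [hf])
    exact absurd (bg_apply_ne hf) (by simpa using (h2 _ h4))
  · exact h4

lemma bg_smul {c : ℂ} (hc : c ≠ 0) (f : ℤ →₀ ℂ) : bg (c • f) = bg f := by
  by_cases hf : f = 0
  · simp [hf]
  have hcf : c • f ≠ 0 := by
    simp only [ne_eq, Finsupp.ext_iff, not_forall]
    obtain ⟨k, hk⟩ := Finsupp.ne_iff.mp hf
    exact ⟨k, by simp only [Finsupp.smul_apply, smul_eq_mul, Finsupp.coe_zero,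
      Pi.zero_apply] at hk ⊢; exact mul_ne_zero hc (by simpa using hk)⟩
  apply le_antisymm
  · exact bg_le (by
      simp only [Finsupp.smul_apply, smul_eq_mul]
      exact mul_ne_zero hc (bg_apply_ne hf))
  · apply bg_le
    have := bg_apply_ne hcf
    simp only [Finsupp.smul_apply, smul_eq_mul, mul_ne_zero_iff] at this
    exact this.2


lemma Vbr_eq (e₁ e₂ : ℂ) (n m : ℤ) :
    Vbr e₁ e₂ n m = ((m - n : ℤ) : ℂ) • Finsupp.single (n + m) 1
      + K2 e₁ n m • Finsupp.single (n + m - 2) 1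
      + K4 e₁ e₂ n m • Finsupp.single (n + m - 4) 1 := by
  rcases Int.even_or_odd n with hn | hn
  · rcases Int.even_or_odd m with hm | hm
    · rw [Vbr, if_neg (by simpa [Int.not_odd_iff_even] using hn),
        if_neg (by simpa [Int.not_odd_iff_even] using hm)]
      rw [K2, K4, kk2, kk4, if_neg (by simpa [Int.not_odd_iff_even] using hn),
        if_neg (by simpa [Int.not_odd_iff_even] using hm),
        if_neg (by simpa [Int.not_odd_iff_even] using hn),
        if_neg (by simpa [Int.not_odd_iff_even] using hm)]
      rw [smul_add, smul_add, smul_smul, smul_smul]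
      ring_nf
    · rw [Vbr, if_neg (by simpa [Int.not_odd_iff_even] using hn), if_pos hm]
      rw [K2, K4, kk2, kk4, if_neg (by simpa [Int.not_odd_iff_even] using hn), if_pos hm,
        if_neg (by simpa [Int.not_odd_iff_even] using hn), if_pos hm]
      rw [VbrOE]
      rw [show m + n = n + m by ring]
      rw [neg_add, neg_add, ← neg_smul, ← neg_smul, ← neg_smul]
      congr 1
      · congr 1
        · congr 1; push_cast; ring
        · congr 1; push_cast; ring
      · congr 1; push_cast; ring
  · rcases Int.even_or_odd m with hm | hm
    · rw [Vbr, if_pos hn, if_neg (by simpa [Int.not_odd_iff_even] using hm)]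
      rw [K2, K4, kk2, kk4, if_pos hn, if_neg (by simpa [Int.not_odd_iff_even] using hm),
        if_pos hn, if_neg (by simpa [Int.not_odd_iff_even] using hm)]
      rw [VbrOE]
      congr 1
      · congr 1; congr 1; push_cast; ring
      · congr 1; push_cast; ring
    · rw [Vbr, if_pos hn, if_pos hm]
      rw [K2, K4, kk2, kk4, if_pos hn, if_pos hm, if_pos hn, if_pos hm]
      simp

lemma sum_single_shift (g : ℤ →₀ ℂ) (w : ℤ → ℂ) (n k : ℤ) :
    (g.sum fun m b => (b * w m) • Finsupp.single (n + m) (1:ℂ)) k = g (k - n) * w (k - n) := by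
  rw [Finsupp.sum_apply]
  rw [Finsupp.sum]
  have : ∀ m ∈ g.support, ((g m * w m) • Finsupp.single (n + m) (1:ℂ)) k
      = if m = k - n then g m * w m else 0 := by
    intro m _
    rw [Finsupp.smul_apply, Finsupp.single_apply]
    by_cases h : m = k - n
    · rw [if_pos h, if_pos (by omega), smul_eq_mul, mul_one]
    · rw [if_neg h, if_neg (by omega), smul_eq_mul, mul_zero]
  rw [Finset.sum_congr rfl this, Finset.sum_ite_eq' g.support (k - n) (fun m => g m * w m)]
  by_cases h : k - n ∈ g.support
  · rw [if_pos h]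
  · rw [if_neg h]
    rw [Finsupp.notMem_support_iff.mp h, zero_mul]

lemma Lbr_apply (e₁ e₂ : ℂ) (f g : ℤ →₀ ℂ) (k : ℤ) :
    Lbr e₁ e₂ f g k = f.sum fun n a => a *
      (g (k - n) * ((k - n - n : ℤ) : ℂ)
        + g (k + 2 - n) * K2 e₁ n (k + 2 - n)
        + g (k + 4 - n) * K4 e₁ e₂ n (k + 4 - n)) := by
  rw [Lbr, Finsupp.sum_apply]
  apply Finsupp.sum_congr
  intro n _
  have h1 : (g.sum fun m b => (f n * b) • Vbr e₁ e₂ n m) k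
      = (g.sum fun m b => (b * (f n * ((m - n : ℤ):ℂ))) • Finsupp.single (n + m) (1:ℂ)) k
        + (g.sum fun m b => (b * (f n * K2 e₁ n m)) • Finsupp.single (n + m - 2) (1:ℂ)) k
        + (g.sum fun m b => (b * (f n * K4 e₁ e₂ n m)) • Finsupp.single (n + m - 4) (1:ℂ)) k := by
    rw [← Finsupp.add_apply, ← Finsupp.add_apply]
    congr 1
    rw [← Finsupp.sum_add, ← Finsupp.sum_add]
    apply Finsupp.sum_congr
    intro m _
    rw [Vbr_eq]
    rw [smul_add, smul_add, smul_smul, smul_smul, smul_smul,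
      show f n * g m * ((m - n : ℤ):ℂ) = g m * (f n * ((m - n : ℤ):ℂ)) by ring,
      show f n * g m * K2 e₁ n m = g m * (f n * K2 e₁ n m) by ring,
      show f n * g m * K4 e₁ e₂ n m = g m * (f n * K4 e₁ e₂ n m) by ring]
  rw [h1]
  have e2 : ∀ m : ℤ, n + m - 2 = (n - 2) + m := by intro m; ring
  have e4 : ∀ m : ℤ, n + m - 4 = (n - 4) + m := by intro m; ring
  simp only [e2, e4]
  rw [sum_single_shift g (fun m => f n * ((m - n : ℤ):ℂ)) n k,
    sum_single_shift g (fun m => f n * K2 e₁ n m) (n - 2) k,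
    sum_single_shift g (fun m => f n * K4 e₁ e₂ n m) (n - 4) k]
  rw [show k - (n - 2) = k + 2 - n by ring, show k - (n - 4) = k + 4 - n by ring]
  push_cast
  ring

lemma sum_window (f : ℤ →₀ ℂ) (F : ℤ → ℂ → ℂ) (lo : ℤ) (N : ℕ)
    (hF : ∀ n, F n 0 = 0)
    (hlo : ∀ n, n < lo → F n (f n) = 0)
    (hhi : ∀ n, lo + N ≤ n → F n (f n) = 0) :
    f.sum F = ∑ a ∈ Finset.range N, F (lo + a) (f (lo + a)) := by
  classical
  set emb : ℕ ↪ ℤ := ⟨fun a : ℕ => lo + (a : ℤ), by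
    intro a b h
    simp only at h
    omega⟩ with hemb
  set W : Finset ℤ := (Finset.range N).map emb with hW
  have hWmem : ∀ n : ℤ, n ∈ W ↔ lo ≤ n ∧ n < lo + N := by
    intro n
    simp only [hW, Finset.mem_map, Finset.mem_range, hemb, Function.Embedding.coeFn_mk]
    constructor
    · rintro ⟨a, ha, rfl⟩
      change lo ≤ lo + (a:ℤ) ∧ lo + (a:ℤ) < lo + N
      omega
    · rintro ⟨h1, h2⟩
      exact ⟨(n - lo).toNat, by omega, by show lo + ((n - lo).toNat : ℤ) = n; omega⟩
  have key : f.sum F = ∑ n ∈ W, F n (f n) := by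
    rw [Finsupp.sum]
    have h1 : ∑ n ∈ f.support, F n (f n) = ∑ n ∈ f.support ∪ W, F n (f n) := by
      apply Finset.sum_subset (Finset.subset_union_left)
      intro n _ hn
      have : f n = 0 := Finsupp.notMem_support_iff.mp hn
      rw [this, hF]
    have h2 : ∑ n ∈ W, F n (f n) = ∑ n ∈ f.support ∪ W, F n (f n) := by
      apply Finset.sum_subset (Finset.subset_union_right)
      intro n hn hnW
      rcases Finset.mem_union.mp hn with h | h
      · rcases lt_or_ge n lo with h3 | h3
        · exact hlo n h3
        · have h4 : lo + N ≤ n := by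
            by_contra h5
            exact hnW ((hWmem n).mpr ⟨h3, by omega⟩)
          exact hhi n h4
      · exact absurd h hnW
    rw [h1, ← h2]
  rw [key, hW, Finset.sum_map]
  simp [hemb]
  rfl

section slots
variable {e₁ e₂ : ℂ} {f g : ℤ →₀ ℂ} {bf bg : ℤ}

lemma slot_gen (hf : ∀ j, j < bf → f j = 0) (hg : ∀ j, j < bg → g j = 0) (i : ℕ) :
    Lbr e₁ e₂ f g (bf + bg - 4 + i) =
      ∑ a ∈ Finset.range (i + 1), f (bf + a) *
        (g (bg + (i - 4 - a)) * ((bg + (i - 4 - a) - (bf + a) : ℤ) : ℂ)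
          + g (bg + (i - 2 - a)) * K2 e₁ (bf + a) (bg + (i - 2 - a))
          + g (bg + (i - a)) * K4 e₁ e₂ (bf + a) (bg + (i - a))) := by
  rw [Lbr_apply]
  set k : ℤ := bf + bg - 4 + i with hk
  have := sum_window f (fun n a => a *
      (g (k - n) * ((k - n - n : ℤ) : ℂ)
        + g (k + 2 - n) * K2 e₁ n (k + 2 - n)
        + g (k + 4 - n) * K4 e₁ e₂ n (k + 4 - n))) bf (i + 1)
    (by intro n; simp)
    (by intro n hn; rw [hf n hn, zero_mul])
    (by
      intro n hn
      have h1 : k - n < bg := by push_cast at hn ⊢; omega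
      have h2 : k + 2 - n < bg := by push_cast at hn ⊢; omega
      have h3 : k + 4 - n < bg := by push_cast at hn ⊢; omega
      rw [hg _ h1, hg _ h2, hg _ h3]
      ring)
  rw [this]
  apply Finset.sum_congr rfl
  intro a ha
  have h1 : k - (bf + a) = bg + (i - 4 - a) := by push_cast; ring
  have h2 : k + 2 - (bf + a) = bg + (i - 2 - a) := by push_cast; ring
  have h3 : k + 4 - (bf + a) = bg + (i - a) := by push_cast; ring
  rw [h1, h2, h3]

lemma slot0 (hf : ∀ j, j < bf → f j = 0) (hg : ∀ j, j < bg → g j = 0) :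
    Lbr e₁ e₂ f g (bf + bg - 4) = f bf * (g bg * K4 e₁ e₂ bf bg) := by
  have := slot_gen (e₁ := e₁) (e₂ := e₂) hf hg 0
  rw [show ((bf + bg - 4 + (0:ℕ)) : ℤ) = bf + bg - 4 by push_cast; ring] at this
  rw [this, Finset.sum_range_one]
  rw [hg (bg + ((0:ℕ) - 4 - (0:ℕ))) (by push_cast; omega),
    hg (bg + ((0:ℕ) - 2 - (0:ℕ))) (by push_cast; omega)]
  rw [show (bg + ((0:ℕ) - (0:ℕ)) : ℤ) = bg by push_cast; ring,
    show (bf + ((0:ℕ)) : ℤ) = bf by push_cast; ring]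
  ring

lemma slot1 (hf : ∀ j, j < bf → f j = 0) (hg : ∀ j, j < bg → g j = 0) :
    Lbr e₁ e₂ f g (bf + bg - 4 + 1) = f bf * (g (bg+1) * K4 e₁ e₂ bf (bg+1)) + f (bf+1) * (g bg * K4 e₁ e₂ (bf+1) bg) := by
  have h := slot_gen (e₁ := e₁) (e₂ := e₂) hf hg 1
  rw [show (bf + bg - 4 + ((1:ℕ):ℤ)) = bf + bg - 4 + 1 by push_cast; ring] at h
  rw [h]
  rw [Finset.sum_range_succ]

  rw [Finset.sum_range_one]
  norm_num
  rw [hg (bg + (-3)) (by omega)]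
  rw [hg (bg + (-1)) (by omega)]
  rw [hg (bg + (-4)) (by omega)]
  rw [hg (bg + (-2)) (by omega)]
  push_cast
  ring

lemma slot2 (hf : ∀ j, j < bf → f j = 0) (hg : ∀ j, j < bg → g j = 0) :
    Lbr e₁ e₂ f g (bf + bg - 4 + 2) = f bf * (g bg * K2 e₁ bf bg + g (bg+2) * K4 e₁ e₂ bf (bg+2))
      + f (bf+1) * (g (bg+1) * K4 e₁ e₂ (bf+1) (bg+1))
      + f (bf+2) * (g bg * K4 e₁ e₂ (bf+2) bg) := by
  have h := slot_gen (e₁ := e₁) (e₂ := e₂) hf hg 2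
  rw [show (bf + bg - 4 + ((2:ℕ):ℤ)) = bf + bg - 4 + 2 by push_cast; ring] at h
  rw [h]
  rw [Finset.sum_range_succ]
  rw [Finset.sum_range_succ]
  rw [Finset.sum_range_one]
  norm_num
  rw [hg (bg + (-2)) (by omega)]
  rw [hg (bg + (-3)) (by omega)]
  rw [hg (bg + (-1)) (by omega)]
  rw [hg (bg + (-4)) (by omega)]
  push_cast
  ring

lemma slot3 (hf : ∀ j, j < bf → f j = 0) (hg : ∀ j, j < bg → g j = 0) :
    Lbr e₁ e₂ f g (bf + bg - 4 + 3) = f bf * (g (bg+1) * K2 e₁ bf (bg+1) + g (bg+3) * K4 e₁ e₂ bf (bg+3))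
      + f (bf+1) * (g bg * K2 e₁ (bf+1) bg + g (bg+2) * K4 e₁ e₂ (bf+1) (bg+2))
      + f (bf+2) * (g (bg+1) * K4 e₁ e₂ (bf+2) (bg+1))
      + f (bf+3) * (g bg * K4 e₁ e₂ (bf+3) bg) := by
  have h := slot_gen (e₁ := e₁) (e₂ := e₂) hf hg 3
  rw [show (bf + bg - 4 + ((3:ℕ):ℤ)) = bf + bg - 4 + 3 by push_cast; ring] at h
  rw [h]
  rw [Finset.sum_range_succ]
  rw [Finset.sum_range_succ]
  rw [Finset.sum_range_succ]
  rw [Finset.sum_range_one]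
  norm_num
  rw [hg (bg + (-1)) (by omega)]
  rw [hg (bg + (-2)) (by omega)]
  rw [hg (bg + (-3)) (by omega)]
  rw [hg (bg + (-4)) (by omega)]
  push_cast
  ring

lemma slot4 (hf : ∀ j, j < bf → f j = 0) (hg : ∀ j, j < bg → g j = 0) :
    Lbr e₁ e₂ f g (bf + bg - 4 + 4) = f bf * (g bg * ((bg - bf : ℤ) : ℂ) + g (bg+2) * K2 e₁ bf (bg+2) + g (bg+4) * K4 e₁ e₂ bf (bg+4))
      + f (bf+1) * (g (bg+1) * K2 e₁ (bf+1) (bg+1) + g (bg+3) * K4 e₁ e₂ (bf+1) (bg+3))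
      + f (bf+2) * (g bg * K2 e₁ (bf+2) bg + g (bg+2) * K4 e₁ e₂ (bf+2) (bg+2))
      + f (bf+3) * (g (bg+1) * K4 e₁ e₂ (bf+3) (bg+1))
      + f (bf+4) * (g bg * K4 e₁ e₂ (bf+4) bg) := by
  have h := slot_gen (e₁ := e₁) (e₂ := e₂) hf hg 4
  rw [show (bf + bg - 4 + ((4:ℕ):ℤ)) = bf + bg - 4 + 4 by push_cast; ring] at h
  rw [h]
  rw [Finset.sum_range_succ]
  rw [Finset.sum_range_succ]
  rw [Finset.sum_range_succ]
  rw [Finset.sum_range_succ]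
  rw [Finset.sum_range_one]
  norm_num
  rw [hg (bg + (-1)) (by omega)]
  rw [hg (bg + (-2)) (by omega)]
  rw [hg (bg + (-3)) (by omega)]
  rw [hg (bg + (-4)) (by omega)]
  push_cast
  ring

lemma top_vanish {df dgg : ℤ} (hf : ∀ j, df < j → f j = 0) (hg : ∀ j, dgg < j → g j = 0)
    {k : ℤ} (hk : df + dgg < k) : Lbr e₁ e₂ f g k = 0 := by
  rw [Lbr_apply, Finsupp.sum]
  apply Finset.sum_eq_zero
  intro n hn
  rcases lt_or_ge df n with h | h
  · rw [Finsupp.notMem_support_iff.mp (by simp [hf n h])]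
    ring
  · rw [hg (k - n) (by omega), hg (k + 2 - n) (by omega), hg (k + 4 - n) (by omega)]
    ring

lemma bot_vanish (hf : ∀ j, j < bf → f j = 0) (hg : ∀ j, j < bg → g j = 0)
    {k : ℤ} (hk : k < bf + bg - 4) : Lbr e₁ e₂ f g k = 0 := by
  rw [Lbr_apply, Finsupp.sum]
  apply Finset.sum_eq_zero
  intro n hn
  rcases lt_or_ge n bf with h | h
  · rw [Finsupp.notMem_support_iff.mp (by simp [hf n h])]
    ring
  · rw [hg (k - n) (by omega), hg (k + 2 - n) (by omega), hg (k + 4 - n) (by omega)]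
    ring

lemma top_slot {df dgg : ℤ} (hf : ∀ j, df < j → f j = 0) (hg : ∀ j, dgg < j → g j = 0) :
    Lbr e₁ e₂ f g (df + dgg) = f df * (g dgg * ((dgg - df : ℤ) : ℂ)) := by
  rw [Lbr_apply]
  have := sum_window f (fun n a => a *
      (g (df + dgg - n) * ((df + dgg - n - n : ℤ) : ℂ)
        + g (df + dgg + 2 - n) * K2 e₁ n (df + dgg + 2 - n)
        + g (df + dgg + 4 - n) * K4 e₁ e₂ n (df + dgg + 4 - n))) df 1
    (by intro n; simp)
    (by
      intro n hn
      rw [hg (df + dgg - n) (by omega), hg (df + dgg + 2 - n) (by omega),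
        hg (df + dgg + 4 - n) (by omega)]
      ring)
    (by
      intro n hn
      rw [hf n (by push_cast at hn; omega), zero_mul])
  rw [this, Finset.sum_range_one]
  norm_num
  left
  rw [show df + dgg + 2 - df = dgg + 2 by ring, show df + dgg + 4 - df = dgg + 4 by ring,
    hg (dgg + 2) (by omega), hg (dgg + 4) (by omega)]
  ring

end slots

section parity
variable {e₁ e₂ : ℂ} {n m : ℤ}

lemma K4_oo (hn : Odd n) (hm : Odd m) : K4 e₁ e₂ n m = 0 := by
  rw [K4, kk4, if_pos hn, if_pos hm]; simp

lemma K4_oe (hn : Odd n) (hm : ¬ Odd m) : K4 e₁ e₂ n m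
    = ((e₁ - e₂) * (e₁ - (-(e₁ + e₂)))) * ((m - n - 2 : ℤ) : ℂ) := by
  rw [K4, kk4, if_pos hn, if_neg hm]

lemma K4_eo (hn : ¬ Odd n) (hm : Odd m) : K4 e₁ e₂ n m
    = ((e₁ - e₂) * (e₁ - (-(e₁ + e₂)))) * ((m - n + 2 : ℤ) : ℂ) := by
  rw [K4, kk4, if_neg hn, if_pos hm]

lemma K4_ee (hn : ¬ Odd n) (hm : ¬ Odd m) : K4 e₁ e₂ n m
    = ((e₁ - e₂) * (e₁ - (-(e₁ + e₂)))) * ((m - n : ℤ) : ℂ) := by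
  rw [K4, kk4, if_neg hn, if_neg hm]

lemma K2_oo (hn : Odd n) (hm : Odd m) : K2 e₁ n m = 0 := by
  rw [K2, kk2, if_pos hn, if_pos hm]; simp

lemma K2_oe (hn : Odd n) (hm : ¬ Odd m) : K2 e₁ n m = (3 * e₁) * ((m - n - 1 : ℤ) : ℂ) := by
  rw [K2, kk2, if_pos hn, if_neg hm]

lemma K2_eo (hn : ¬ Odd n) (hm : Odd m) : K2 e₁ n m = (3 * e₁) * ((m - n + 1 : ℤ) : ℂ) := by
  rw [K2, kk2, if_neg hn, if_pos hm]

lemma K2_ee (hn : ¬ Odd n) (hm : ¬ Odd m) : K2 e₁ n m = (3 * e₁) * ((m - n : ℤ) : ℂ) := by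
  rw [K2, kk2, if_neg hn, if_neg hm]

lemma K4_zero (hC : (e₁ - e₂) * (e₁ - (-(e₁ + e₂))) = 0) : K4 e₁ e₂ n m = 0 := by
  rw [K4, hC, zero_mul]

end parity

section lin
variable (e₁ e₂ : ℂ)

lemma Lbr_smul_left (c : ℂ) (f g : ℤ →₀ ℂ) :
    Lbr e₁ e₂ (c • f) g = c • Lbr e₁ e₂ f g := by
  rw [Lbr, Lbr, Finsupp.smul_sum]
  rw [Finsupp.sum_smul_index (fun i => by simp [Finsupp.sum])]
  apply Finsupp.sum_congr
  intro n _
  rw [Finsupp.smul_sum]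
  apply Finsupp.sum_congr
  intro m _
  rw [smul_smul]
  congr 1
  ring

lemma Lbr_smul_right (c : ℂ) (f g : ℤ →₀ ℂ) :
    Lbr e₁ e₂ f (c • g) = c • Lbr e₁ e₂ f g := by
  rw [Lbr, Lbr, Finsupp.smul_sum]
  apply Finsupp.sum_congr
  intro n _
  rw [Finsupp.sum_smul_index (fun i => by simp), Finsupp.smul_sum]
  apply Finsupp.sum_congr
  intro m _
  rw [smul_smul]
  congr 1
  ring

lemma dg_smul {c : ℂ} (hc : c ≠ 0) (f : ℤ →₀ ℂ) : dg (c • f) = dg f := by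
  by_cases hf : f = 0
  · simp [hf]
  have hcf : c • f ≠ 0 := by
    intro h
    apply hf
    ext k
    have := congrArg (fun x => x k) h
    simp only [Finsupp.smul_apply, smul_eq_mul, Finsupp.coe_zero, Pi.zero_apply] at this
    simpa using (mul_eq_zero.mp this).resolve_left hc
  apply le_antisymm
  · apply le_dg
    have := dg_apply_ne hcf
    simp only [Finsupp.smul_apply, smul_eq_mul, mul_ne_zero_iff] at this
    exact le_dg this.2 |>.trans_eq rfl |> fun _ => this.2
  · exact le_dg (by
      simp only [Finsupp.smul_apply, smul_eq_mul]
      exact mul_ne_zero hc (dg_apply_ne hf))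

lemma smul_ne_zero' {c : ℂ} (hc : c ≠ 0) {f : ℤ →₀ ℂ} (hf : f ≠ 0) : c • f ≠ 0 := by
  intro h
  apply hf
  ext k
  have := congrArg (fun x => x k) h
  simp only [Finsupp.smul_apply, smul_eq_mul, Finsupp.coe_zero, Pi.zero_apply] at this
  simpa using (mul_eq_zero.mp this).resolve_left hc

end lin

section main
variable {e₁ e₂ : ℂ}

lemma combo_apply (u : ℤ → (ℤ →₀ ℂ)) (c : ℤ →₀ ℂ) (k : ℤ) :
    (c.sum fun m a => a • u m) k = ∑ m ∈ c.support, c m * u m k := by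
  rw [Finsupp.sum_apply, Finsupp.sum]
  apply Finset.sum_congr rfl
  intro m _
  rw [Finsupp.smul_apply, smul_eq_mul]

lemma span_extract (u : ℤ → (ℤ →₀ ℂ))
    (hspan : ∀ v : ℤ →₀ ℂ, v ∈ Submodule.span ℂ (Set.range u)) (v : ℤ →₀ ℂ) :
    ∃ c : ℤ →₀ ℂ, (c.sum fun m a => a • u m) = v :=
  Finsupp.mem_span_range_iff_exists_finsupp.mp (hspan v)

lemma span_bounded_top (u : ℤ → (ℤ →₀ ℂ))
    (hspan : ∀ v : ℤ →₀ ℂ, v ∈ Submodule.span ℂ (Set.range u))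
    (p : ℤ) (hub : ∀ m, dg (u m) ≤ p) : False := by
  obtain ⟨c, hc⟩ := span_extract u hspan (Finsupp.single (p+1) 1)
  have h1 := congrArg (fun f : ℤ →₀ ℂ => f (p+1)) hc
  rw [combo_apply] at h1
  have h2 : ∀ m ∈ c.support, c m * u m (p+1) = 0 := by
    intro m _
    rw [apply_eq_zero_of_dg_lt (lt_of_le_of_lt (hub m) (by omega)), mul_zero]
  rw [Finset.sum_congr rfl h2, Finset.sum_const_zero] at h1
  rw [Finsupp.single_apply, if_pos rfl] at h1
  exact one_ne_zero h1.symm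

lemma eig_coeff (u : ℤ → (ℤ →₀ ℂ))
    (hrel : ∀ n m : ℤ, Lbr e₁ e₂ (u n) (u m) = ((m - n : ℤ) : ℂ) • u (n + m))
    (m k : ℤ) : Lbr e₁ e₂ (u 0) (u m) k = (m : ℂ) * u m k := by
  have := hrel 0 m
  rw [show m - 0 = m by ring, show (0:ℤ) + m = m by ring] at this
  rw [this, Finsupp.smul_apply, smul_eq_mul]

lemma pair_coeff (u : ℤ → (ℤ →₀ ℂ))
    (hrel : ∀ n m : ℤ, Lbr e₁ e₂ (u n) (u m) = ((m - n : ℤ) : ℂ) • u (n + m))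
    (n m k : ℤ) : Lbr e₁ e₂ (u n) (u m) k = ((m - n : ℤ) : ℂ) * u (n + m) k := by
  rw [hrel n m, Finsupp.smul_apply, smul_eq_mul]

theorem main_core (hne : ¬(e₁ = 0 ∧ e₂ = 0))
    (u : ℤ → (ℤ →₀ ℂ))
    (hrel : ∀ n m : ℤ, Lbr e₁ e₂ (u n) (u m) = ((m - n : ℤ) : ℂ) • u (n + m))
    (hnz : ∀ m, u m ≠ 0)
    (hspan : ∀ v : ℤ →₀ ℂ, v ∈ Submodule.span ℂ (Set.range u))
    (hd : ∀ m : ℤ, dg (u m) = m) : False := by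
  classical
  set β : ℤ → ℤ := fun m => bg (u m) with hβdef
  have hβle : ∀ m, β m ≤ m := by
    intro m
    have := bg_le_dg (hnz m)
    rw [hd m] at this
    exact this
  have hbot : ∀ m j, j < β m → u m j = 0 := fun m j h => apply_eq_zero_of_lt_bg h
  have htm : ∀ m, u m (β m) ≠ 0 := fun m => bg_apply_ne (hnz m)
  set r : ℤ := β 0 with hrdef
  have hr0 : r ≤ 0 := hβle 0
  by_cases hC : (e₁ - e₂) * (e₁ - (-(e₁ + e₂))) = 0
  · -- C = 0 case
    have he1 : e₁ ≠ 0 := by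
      intro h0
      apply hne
      refine ⟨h0, ?_⟩
      rw [h0] at hC
      have h2 : e₂ * e₂ = 0 := by linear_combination -hC
      exact (mul_self_eq_zero).mp h2
    have h3 : (3 : ℂ) * e₁ ≠ 0 := by
      intro h
      rcases mul_eq_zero.mp h with h | h
      · norm_num at h
      · exact he1 h
    have hK4 : ∀ n m : ℤ, K4 e₁ e₂ n m = 0 := fun n m => K4_zero hC
    -- slot 2 constraint
    have hkk2 : ∀ m : ℤ, m ≠ 0 → kk2 r (β m) = 0 := by
      intro m hm
      have e2 : Lbr e₁ e₂ (u 0) (u m) (r + β m - 4 + 2)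
          = u 0 r * (u m (β m) * K2 e₁ r (β m) + u m (β m + 2) * K4 e₁ e₂ r (β m + 2))
            + u 0 (r+1) * (u m (β m + 1) * K4 e₁ e₂ (r+1) (β m + 1))
            + u 0 (r+2) * (u m (β m) * K4 e₁ e₂ (r+2) (β m)) :=
        slot2 (hbot 0) (hbot m)
      rw [eig_coeff u hrel m, hbot m _ (by omega), mul_zero, hK4, hK4, hK4] at e2
      simp only [mul_zero, zero_mul, add_zero, mul_zero] at e2
      have : K2 e₁ r (β m) = 0 := by
        have h1 := htm 0
        have h2 := htm m
        rcases mul_eq_zero.mp e2.symm with h | h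
        · exact absurd h h1
        rcases mul_eq_zero.mp h with h | h
        · exact absurd h h2
        · exact h
      rw [K2] at this
      rcases mul_eq_zero.mp this with h | h
      · exact absurd h h3
      · exact_mod_cast h
    rcases Int.even_or_odd r with hre | hro
    · -- r even : β m ∈ {r, r-1}, contradiction at m = r-2
      have hrne : ¬ Odd r := by rw [Int.not_odd_iff_even]; exact hre
      have hb : ∀ m : ℤ, m ≠ 0 → β m = r ∨ β m = r - 1 := by
        intro m hm
        have := hkk2 m hm
        rw [kk2, if_neg hrne] at this
        by_cases hbm : Odd (β m)
        · rw [if_pos hbm] at this; right; omega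
        · rw [if_neg hbm] at this; left; omega
      have h1 := hb (r - 2) (by omega)
      have h2 := hβle (r - 2)
      omega
    · -- r odd
      have hrO : Odd r := hro
      have hr2 : r % 2 = 1 := Int.odd_iff.mp hrO
      have hr1 : r ≤ -1 := by omega
      -- deep bottoms are odd and < r
      have hdeep : ∀ m : ℤ, m ≤ r - 1 → Odd (β m) ∧ β m < r := by
        intro m hm
        have hm0 : m ≠ 0 := by omega
        have h1 : β m ≤ m := hβle m
        constructor
        · have h2 := hkk2 m hm0
          rw [kk2, if_pos hrO] at h2
          by_cases hbm : Odd (β m)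
          · exact hbm
          · rw [if_neg hbm] at h2; omega
        · omega
      -- step 1
      have hstep1 : ∀ m : ℤ, m ≤ r - 1 →
          u 0 r * u m (β m + 1) + u 0 (r+1) * u m (β m) = 0 := by
        intro m hm
        obtain ⟨hbo, hblt⟩ := hdeep m hm
        have hb2 : (β m) % 2 = 1 := Int.odd_iff.mp hbo
        set b : ℤ := β m with hbdef
        have e3 := slot3 (e₁ := e₁) (e₂ := e₂) (f := u 0) (g := u m) (bf := r) (bg := b)
          (hbot 0) (hbot m)
        rw [eig_coeff u hrel m, hbot m _ (by omega), mul_zero] at e3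
        simp only [hK4, mul_zero, add_zero, zero_mul, zero_add] at e3
        rw [K2_oe (n := r) (m := b+1) hrO (by rw [Int.odd_iff]; omega),
          K2_eo (n := r+1) (m := b) (by rw [Int.odd_iff]; omega) hbo] at e3
        have key : (3*e₁) * (((b:ℂ) - r)) * (u 0 r * u m (b + 1) + u 0 (r+1) * u m b) = 0 := by
          push_cast at e3
          linear_combination -e3
        have hbr : (((b:ℂ) - r)) ≠ 0 := by
          have : ((b - r : ℤ) : ℂ) ≠ 0 := Int.cast_ne_zero.mpr (by omega)
          push_cast at this
          exact this
        rcases mul_eq_zero.mp key with h | h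
        · rcases mul_eq_zero.mp h with h | h
          · exact absurd h h3
          · exact absurd h hbr
        · exact h
      -- step 2
      have hstep2 : ∀ m : ℤ, m ≤ r - 1 →
          u 0 r * u m (β m) + 3*e₁ * (u 0 (r+1) * u m (β m + 1)) = 0 := by
        intro m hm
        obtain ⟨hbo, hblt⟩ := hdeep m hm
        have hb2 : (β m) % 2 = 1 := Int.odd_iff.mp hbo
        set b : ℤ := β m with hbdef
        have e4 := slot4 (e₁ := e₁) (e₂ := e₂) (f := u 0) (g := u m) (bf := r) (bg := b)
          (hbot 0) (hbot m)
        rw [eig_coeff u hrel m, hbot m _ (by omega), mul_zero] at e4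
        simp only [hK4, mul_zero, add_zero, zero_mul, zero_add] at e4
        rw [K2_oo (n := r) (m := b+2) hrO (by rw [Int.odd_iff]; omega),
          K2_ee (n := r+1) (m := b+1) (by rw [Int.odd_iff]; omega) (by rw [Int.odd_iff]; omega),
          K2_oo (n := r+2) (m := b) (by rw [Int.odd_iff]; omega) hbo] at e4
        have key : (((b:ℂ) - r)) * (u 0 r * u m b + 3*e₁ * (u 0 (r+1) * u m (b + 1))) = 0 := by
          push_cast at e4
          linear_combination -e4
        have hbr : (((b:ℂ) - r)) ≠ 0 := by
          have : ((b - r : ℤ) : ℂ) ≠ 0 := Int.cast_ne_zero.mpr (by omega)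
          push_cast at this
          exact this
        rcases mul_eq_zero.mp key with h | h
        · exact absurd h hbr
        · exact h
      -- t^2 = 3 e1 q^2 and q ≠ 0
      have hqt : u 0 r * u 0 r = 3*e₁ * (u 0 (r+1) * u 0 (r+1)) := by
        have S1 := hstep1 (r-1) (by omega)
        have S2 := hstep2 (r-1) (by omega)
        have key : (u 0 r * u 0 r - 3*e₁ * (u 0 (r+1) * u 0 (r+1))) * u (r-1) (β (r-1)) = 0 := by
          linear_combination u 0 r * S2 - (3*e₁* u 0 (r+1)) * S1
        rcases mul_eq_zero.mp key with h | h
        · linear_combination h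
        · exact absurd h (htm (r-1))
      have hqne : u 0 (r+1) ≠ 0 := by
        intro h0
        rw [h0] at hqt
        simp only [mul_zero, zero_mul] at hqt
        exact (htm 0) (mul_self_eq_zero.mp hqt)
      -- pair bottom-value nonvanishing
      have hAne : ∀ n m : ℤ, n ≤ r - 1 → m ≤ r - 1 →
          u n (β n) * u m (β m + 1) + u n (β n + 1) * u m (β m) ≠ 0 := by
        intro n m hn hm hA0
        have S1n := hstep1 n hn
        have S1m := hstep1 m hm
        have key : u 0 r * u 0 r * (u n (β n) * u m (β m + 1) + u n (β n + 1) * u m (β m))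
            = -2 * u 0 (r+1) * u 0 r * (u n (β n) * u m (β m)) := by
          linear_combination (u 0 r * u n (β n)) * S1m + (u 0 r * u m (β m)) * S1n
        rw [hA0, mul_zero] at key
        have h2 : u n (β n) * u m (β m) ≠ 0 := mul_ne_zero (htm n) (htm m)
        have h3' : (-2 : ℂ) * u 0 (r+1) * u 0 r ≠ 0 :=
          mul_ne_zero (mul_ne_zero (by norm_num) hqne) (htm 0)
        exact (mul_ne_zero h3' h2) key.symm
      -- additivity (distinct bottoms)
      have addlem : ∀ n m : ℤ, n ≤ r - 1 → m ≤ r - 1 → n ≠ m → β n ≠ β m →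
          β (n+m) = β n + β m - 1 := by
        intro n m hn hm hnm hbnm
        obtain ⟨hbnO, hbnlt⟩ := hdeep n hn
        obtain ⟨hbmO, hbmlt⟩ := hdeep m hm
        have hbn2 : (β n) % 2 = 1 := Int.odd_iff.mp hbnO
        have hbm2 : (β m) % 2 = 1 := Int.odd_iff.mp hbmO
        have hmn : ((m - n : ℤ) : ℂ) ≠ 0 := Int.cast_ne_zero.mpr (by omega)
        -- value at I := β n + β m - 1
        have e3 := slot3 (e₁ := e₁) (e₂ := e₂) (f := u n) (g := u m) (bf := β n) (bg := β m)
          (hbot n) (hbot m)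
        rw [pair_coeff u hrel] at e3
        simp only [hK4, mul_zero, add_zero, zero_mul, zero_add] at e3
        rw [K2_oe (n := β n) (m := β m + 1) hbnO (by rw [Int.odd_iff]; omega),
          K2_eo (n := β n + 1) (m := β m) (by rw [Int.odd_iff]; omega) hbmO] at e3
        have hval : ((m:ℂ) - n) * u (n+m) (β n + β m - 4 + 3)
            = 3*e₁ * (((β m : ℂ) - β n))
              * (u n (β n) * u m (β m + 1) + u n (β n + 1) * u m (β m)) := by
          push_cast at e3 ⊢
          linear_combination e3
        have hne' : u (n+m) (β n + β m - 1) ≠ 0 := by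
          intro h0
          rw [show β n + β m - 4 + 3 = β n + β m - 1 by ring, h0, mul_zero] at hval
          have hc1 : (3*e₁) * (((β m : ℂ) - β n)) ≠ 0 := by
            apply mul_ne_zero h3
            have : ((β m - β n : ℤ) : ℂ) ≠ 0 := Int.cast_ne_zero.mpr (by omega)
            push_cast at this
            exact this
          exact (mul_ne_zero hc1 (hAne n m hn hm)) hval.symm
        have hlow : ∀ i, i < β n + β m - 1 → u (n+m) i = 0 := by
          intro i hi
          have extract : Lbr e₁ e₂ (u n) (u m) i = 0 → u (n+m) i = 0 := by
            intro hL
            rw [pair_coeff u hrel] at hL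
            rcases mul_eq_zero.mp hL with h | h
            · exact absurd h hmn
            · exact h
          rcases (by omega : i < β n + β m - 4 ∨ i = β n + β m - 4 ∨ i = β n + β m - 3
              ∨ i = β n + β m - 2) with h | h | h | h
          · exact extract (bot_vanish (hbot n) (hbot m) h)
          · apply extract
            rw [h, slot0 (hbot n) (hbot m), hK4]
            ring
          · apply extract
            rw [show i = β n + β m - 4 + 1 by omega, slot1 (hbot n) (hbot m), hK4, hK4]
            ring
          · apply extract
            rw [show i = β n + β m - 4 + 2 by omega, slot2 (hbot n) (hbot m), hK4, hK4, hK4,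
              K2_oo (n := β n) (m := β m) hbnO hbmO]
            ring
        exact bg_eq_of hne' hlow
      -- additivity (all pairs)
      have addlem2 : ∀ n m : ℤ, n ≤ r - 1 → m ≤ r - 1 → n ≠ m →
          β (n+m) = β n + β m - 1 := by
        intro n m hn hm hnm
        by_cases hbb : β n = β m
        case neg => exact addlem n m hn hm hnm hbb
        have hβk0 : β (n+m) ≤ n + m := hβle (n+m)
        set k : ℤ := min (min (n+m) (β n)) (min (β (n+m)) (m-n)) - 1 with hkdef
        have hβk : β k ≤ k := hβle k
        have hk1 : k ≤ r - 1 := by omega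
        have a1 : β (n+k) = β n + β k - 1 :=
          addlem n k hn hk1 (by omega) (by omega)
        have hnk : n + k ≤ r - 1 := by omega
        have a2 : β ((n+k)+m) = β (n+k) + β m - 1 :=
          addlem (n+k) m hnk hm (by omega) (by rw [a1]; omega)
        have a3 : β (k+(n+m)) = β k + β (n+m) - 1 :=
          addlem k (n+m) hk1 (by omega) (by omega) (by omega)
        rw [show (n+k)+m = k+(n+m) by ring] at a2
        omega
      -- increments are constant
      have hinc : ∀ m n : ℤ, m ≤ r - 1 → n ≤ r - 1 → n ≠ m - 1 → m ≠ n - 1 →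
          β (m-1) - β m = β (n-1) - β n := by
        intro m n hm hn h1 h2
        have a1 := addlem2 (m-1) n (by omega) hn (by omega)
        have a2 := addlem2 m (n-1) hm (by omega) (by omega)
        rw [show m-1+n = m+(n-1) by ring] at a1
        omega
      set q : ℤ := β (r-2) - β (r-3) with hq
      have hstepd : ∀ m : ℤ, m ≤ r - 2 → β (m-1) = β m - q := by
        intro m hm
        by_cases hcase : m = r - 3
        · subst hcase
          have i1 := hinc (r-3) (r-10) (by omega) (by omega) (by omega) (by omega)
          have i2 := hinc (r-2) (r-10) (by omega) (by omega) (by omega) (by omega)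
          rw [show r-3-1 = r-4 by ring] at i1 ⊢
          rw [show r-2-1 = r-3 by ring] at i2
          rw [show r-10-1 = r-11 by ring] at i1 i2
          omega
        · have i1 := hinc m (r-2) (by omega) (by omega) (by omega) (by omega)
          rw [show r-2-1 = r-3 by ring] at i1
          omega
      have hlin0 : ∀ j : ℕ, β (r-2-j) = β (r-2) - q * j := by
        intro j
        induction j with
        | zero => simp
        | succ i ih =>
          have hs := hstepd (r-2-i) (by omega)
          have hcast : r-2-((i+1 : ℕ) : ℤ) = (r-2-(i:ℤ)) - 1 := by push_cast; ring
          rw [hcast, hs, ih]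
          have : q * ((i:ℤ)+1) = q * i + q := by ring
          push_cast
          linarith [this]
      have hlin : ∀ m : ℤ, m ≤ r - 2 → β m = β (r-2) - q * (r-2-m) := by
        intro m hm
        have h0 := hlin0 (r-2-m).toNat
        have h1 : ((r-2-m).toNat : ℤ) = r-2-m := by omega
        rw [h1] at h0
        rw [show r-2-(r-2-m) = m by ring] at h0
        exact h0
      have hBval : β (r-2) = q * (r-2) + 1 := by
        have e := addlem2 (r-3) (r-4) (by omega) (by omega) (by omega)
        rw [show r-3+(r-4) = 2*r-7 by ring] at e
        have h1 := hlin (2*r-7) (by omega)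
        have h2 := hlin (r-3) (by omega)
        have h3 := hlin (r-4) (by omega)
        rw [h1, h2, h3] at e
        linear_combination -e
      have hβlin : ∀ m : ℤ, m ≤ r - 2 → β m = q * m + 1 := by
        intro m hm
        have h0 := hlin m hm
        rw [hBval] at h0
        linear_combination h0
      have hq2 : 2 ≤ q := by
        have h1 := hβlin (r-2) (le_refl _)
        have h2 := hβle (r-2)
        by_contra hq1
        push_neg at hq1
        have h4 : q ≤ 1 := by omega
        have h5 : 1 * (r-2) ≤ q * (r-2) := mul_le_mul_of_nonpos_right h4 (by omega)
        rw [one_mul] at h5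
        omega
      -- final contradiction via spanning
      obtain ⟨c, hc⟩ := span_extract u hspan (Finsupp.single (r-4) 1)
      have hcne : c ≠ 0 := by
        intro h0
        rw [h0, Finsupp.sum_zero_index] at hc
        have := congrArg (fun f : ℤ →₀ ℂ => f (r-4)) hc
        simp [Finsupp.single_apply] at this
      have hsupp : c.support.Nonempty := Finsupp.support_nonempty_iff.mpr hcne
      have heval : ∀ j : ℤ, (Finsupp.single (r-4) (1:ℂ)) j = ∑ m ∈ c.support, c m * u m j :=
        fun j => by rw [← hc, combo_apply]
      set M : ℤ := c.support.max' hsupp with hM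
      have hMk : M = r - 4 := by
        have h1 := heval M
        rw [Finset.sum_eq_single_of_mem M (c.support.max'_mem hsupp) (by
          intro m hmem hne
          have hle := Finset.le_max' c.support m hmem
          have hdm : dg (u m) < M := by rw [hd m]; omega
          rw [apply_eq_zero_of_dg_lt hdm, mul_zero])] at h1
        have hne0 : c M * u M M ≠ 0 := by
          apply mul_ne_zero (Finsupp.mem_support_iff.mp (c.support.max'_mem hsupp))
          have hdM := dg_apply_ne (hnz M)
          rw [hd M] at hdM
          exact hdM
        by_contra hMk
        rw [Finsupp.single_apply, if_neg (by omega)] at h1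
        exact hne0 h1.symm
      have hallle : ∀ m ∈ c.support, m ≤ r - 4 := by
        intro m hm
        have := Finset.le_max' c.support m hm
        omega
      set m1 : ℤ := c.support.min' hsupp with hm1
      have hm1mem : m1 ∈ c.support := c.support.min'_mem hsupp
      have hm1le : m1 ≤ r - 4 := hallle m1 hm1mem
      have hβm1 : β m1 = q * m1 + 1 := hβlin m1 (by omega)
      have h1 := heval (q * m1 + 1)
      rw [Finset.sum_eq_single_of_mem m1 hm1mem (by
        intro m hmem hne
        have hge := Finset.min'_le c.support m hmem
        have hmle := hallle m hmem
        have hmm : q * m1 < q * m :=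
          mul_lt_mul_of_pos_left (by omega) (by omega)
        have hβm := hβlin m (by omega)
        have hlt : q * m1 + 1 < β m := by rw [hβm]; linarith
        rw [apply_eq_zero_of_lt_bg hlt, mul_zero])] at h1
      have hne0 : c m1 * u m1 (q * m1 + 1) ≠ 0 := by
        apply mul_ne_zero (Finsupp.mem_support_iff.mp hm1mem)
        rw [← hβm1]
        exact htm m1
      have hJne : ¬ (r - 4 = q * m1 + 1) := by
        have h5 : q * m1 ≤ 2 * m1 := mul_le_mul_of_nonpos_right hq2 (by omega)
        omega
      rw [Finsupp.single_apply, if_neg hJne] at h1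
      exact hne0 h1.symm
  · -- C ≠ 0 case
    have hK4slot0 : ∀ m : ℤ, m ≠ 0 → kk4 r (β m) = 0 := by
      intro m hm
      have e0 : Lbr e₁ e₂ (u 0) (u m) (r + β m - 4)
          = u 0 r * (u m (β m) * K4 e₁ e₂ r (β m)) := slot0 (hbot 0) (hbot m)
      rw [eig_coeff u hrel m, hbot m _ (by omega), mul_zero] at e0
      have : K4 e₁ e₂ r (β m) = 0 := by
        rcases mul_eq_zero.mp e0.symm with h | h
        · exact absurd h (htm 0)
        rcases mul_eq_zero.mp h with h | h
        · exact absurd h (htm m)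
        · exact h
      rw [K4] at this
      rcases mul_eq_zero.mp this with h | h
      · exact absurd h hC
      · exact_mod_cast h
    rcases Int.even_or_odd r with hre | hro
    · -- r even : β m = r for all m ≠ 0
      have hrne : ¬ Odd r := by rw [Int.not_odd_iff_even]; exact hre
      have hr2 : r % 2 = 0 := Int.even_iff.mp hre
      have hb : ∀ m : ℤ, m ≠ 0 → β m = r := by
        intro m hm
        have := hK4slot0 m hm
        rw [kk4, if_neg hrne] at this
        by_cases hbm : Odd (β m)
        · rw [if_pos hbm] at this
          have hb2 := Int.odd_iff.mp hbm
          omega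
        · rw [if_neg hbm] at this; omega
      have h1 := hb (r - 1) (by omega)
      have h2 := hβle (r - 1)
      omega
    · -- r odd
      have hrO : Odd r := hro
      have hr2 : r % 2 = 1 := Int.odd_iff.mp hrO
      have hr1 : r ≤ -1 := by omega
      have hβodd : ∀ m : ℤ, m ≠ 0 → Odd (β m) := by
        intro m hm
        have := hK4slot0 m hm
        rw [kk4, if_pos hrO] at this
        by_cases hbm : Odd (β m)
        · exact hbm
        · rw [if_neg hbm] at this
          rw [Int.not_odd_iff_even, Int.even_iff] at hbm
          omega
      have hb : ∀ m : ℤ, m ≠ 0 → β m = r := by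
        intro m hm
        have hbo := hβodd m hm
        have hb2 : (β m) % 2 = 1 := Int.odd_iff.mp hbo
        set b : ℤ := β m with hbdef
        by_contra hne2
        -- slot 1
        have e1 : Lbr e₁ e₂ (u 0) (u m) (r + b - 4 + 1)
            = u 0 r * (u m (b+1) * K4 e₁ e₂ r (b+1)) + u 0 (r+1) * (u m b * K4 e₁ e₂ (r+1) b) :=
          slot1 (hbot 0) (hbot m)
        rw [eig_coeff u hrel m, hbot m _ (by omega), mul_zero] at e1
        rw [K4_oe (n := r) (m := b+1) hrO (by rw [Int.odd_iff]; omega),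
          K4_eo (n := r+1) (m := b) (by rw [Int.odd_iff]; omega) hbo] at e1
        -- slot 2
        have e2 : Lbr e₁ e₂ (u 0) (u m) (r + b - 4 + 2)
            = u 0 r * (u m b * K2 e₁ r b + u m (b + 2) * K4 e₁ e₂ r (b + 2))
              + u 0 (r+1) * (u m (b + 1) * K4 e₁ e₂ (r+1) (b + 1))
              + u 0 (r+2) * (u m b * K4 e₁ e₂ (r+2) b) := slot2 (hbot 0) (hbot m)
        rw [eig_coeff u hrel m, hbot m _ (by omega), mul_zero] at e2
        rw [K2_oo (n := r) (m := b) hrO hbo,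
          K4_oo (n := r) (m := b+2) hrO (by rw [Int.odd_iff]; omega),
          K4_ee (n := r+1) (m := b+1) (by rw [Int.odd_iff]; omega) (by rw [Int.odd_iff]; omega),
          K4_oo (n := r+2) (m := b) (by rw [Int.odd_iff]; omega) hbo] at e2
        simp only [mul_zero, zero_mul, add_zero, zero_add] at e2
        by_cases hq0 : u 0 (r+1) = 0
        · -- second coefficient of x vanishes
          rw [hq0, zero_mul, add_zero] at e1
          have hcast1 : ((b + 1 - r - 2 : ℤ) : ℂ) ≠ 0 := by
            rw [Int.cast_ne_zero]; omega
          have hg1 : u m (b+1) = 0 := by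
            rcases mul_eq_zero.mp e1.symm with h | h
            · exact absurd h (htm 0)
            rcases mul_eq_zero.mp h with h | h
            · exact h
            · rcases mul_eq_zero.mp h with h | h
              · exact absurd h hC
              · exact absurd h hcast1
          -- slot 4
          have e4 : Lbr e₁ e₂ (u 0) (u m) (r + b - 4 + 4)
              = u 0 r * (u m b * ((b - r : ℤ) : ℂ) + u m (b+2) * K2 e₁ r (b+2)
                  + u m (b+4) * K4 e₁ e₂ r (b+4))
                + u 0 (r+1) * (u m (b+1) * K2 e₁ (r+1) (b+1) + u m (b+3) * K4 e₁ e₂ (r+1) (b+3))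
                + u 0 (r+2) * (u m b * K2 e₁ (r+2) b + u m (b+2) * K4 e₁ e₂ (r+2) (b+2))
                + u 0 (r+3) * (u m (b+1) * K4 e₁ e₂ (r+3) (b+1))
                + u 0 (r+4) * (u m b * K4 e₁ e₂ (r+4) b) := slot4 (hbot 0) (hbot m)
          rw [eig_coeff u hrel m, hbot m _ (by omega), mul_zero] at e4
          rw [hq0, hg1,
            K2_oo (n := r) (m := b+2) hrO (by rw [Int.odd_iff]; omega),
            K4_oo (n := r) (m := b+4) hrO (by rw [Int.odd_iff]; omega),
            K2_oo (n := r+2) (m := b) (by rw [Int.odd_iff]; omega) hbo,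
            K4_oo (n := r+2) (m := b+2) (by rw [Int.odd_iff]; omega) (by rw [Int.odd_iff]; omega),
            K4_oo (n := r+4) (m := b) (by rw [Int.odd_iff]; omega) hbo] at e4
          simp only [mul_zero, zero_mul, add_zero, zero_add] at e4
          have : ((b - r : ℤ) : ℂ) = 0 := by
            rcases mul_eq_zero.mp e4.symm with h | h
            · exact absurd h (htm 0)
            rcases mul_eq_zero.mp h with h | h
            · exact absurd h (htm m)
            · exact h
          rw [Int.cast_eq_zero] at this
          omega
        · -- u 0 (r+1) ≠ 0 : from e2, u m (b+1) = 0
          have hcast2 : ((b + 1 - (r + 1) : ℤ) : ℂ) ≠ 0 := by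
            rw [Int.cast_ne_zero]; omega
          have hg1 : u m (b+1) = 0 := by
            rcases mul_eq_zero.mp e2.symm with h | h
            · exact absurd h hq0
            rcases mul_eq_zero.mp h with h | h
            · exact h
            · rcases mul_eq_zero.mp h with h | h
              · exact absurd h hC
              · exact absurd h hcast2
          simp only [hg1, zero_mul, mul_zero, zero_add] at e1
          have : ((b - (r + 1) + 2 : ℤ) : ℂ) = 0 := by
            rcases mul_eq_zero.mp e1.symm with h | h
            · exact absurd h hq0
            rcases mul_eq_zero.mp h with h | h
            · exact absurd h (htm m)
            · rcases mul_eq_zero.mp h with h | h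
              · exact absurd h hC
              · exact h
          rw [Int.cast_eq_zero] at this
          omega
      have h1 := hb (r - 3) (by omega)
      have h2 := hβle (r - 3)
      omega

theorem pre2 (hne : ¬(e₁ = 0 ∧ e₂ = 0))
    (u : ℤ → (ℤ →₀ ℂ))
    (hrel : ∀ n m : ℤ, Lbr e₁ e₂ (u n) (u m) = ((m - n : ℤ) : ℂ) • u (n + m))
    (hnz : ∀ m, u m ≠ 0)
    (hspan : ∀ v : ℤ →₀ ℂ, v ∈ Submodule.span ℂ (Set.range u))
    (δ : ℤ) (hδ : 1 ≤ δ) (hdlin : ∀ m : ℤ, dg (u m) = m * δ) : False := by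
  classical
  have hδ1 : δ = 1 := by
    obtain ⟨c, hc⟩ := span_extract u hspan (Finsupp.single 1 1)
    have hcne : c ≠ 0 := by
      intro h0
      rw [h0, Finsupp.sum_zero_index] at hc
      have := congrArg (fun f : ℤ →₀ ℂ => f 1) hc
      simp [Finsupp.single_apply] at this
    have hsupp : c.support.Nonempty := Finsupp.support_nonempty_iff.mpr hcne
    set M : ℤ := c.support.max' hsupp with hM
    have h1 := congrArg (fun f : ℤ →₀ ℂ => f (M * δ)) hc
    rw [combo_apply] at h1
    rw [Finset.sum_eq_single_of_mem M (c.support.max'_mem hsupp) (by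
      intro m hmem hne'
      have hle := Finset.le_max' c.support m hmem
      have hdm : dg (u m) < M * δ := by
        rw [hdlin m]
        have : m < M := lt_of_le_of_ne hle hne'
        exact mul_lt_mul_of_pos_right this (by omega)
      rw [apply_eq_zero_of_dg_lt hdm, mul_zero])] at h1
    have hne0 : c M * u M (M * δ) ≠ 0 := by
      apply mul_ne_zero (Finsupp.mem_support_iff.mp (c.support.max'_mem hsupp))
      have := dg_apply_ne (hnz M)
      rw [hdlin M] at this
      exact this
    have hMδ : M * δ = 1 := by
      by_contra hne'
      rw [Finsupp.single_apply, if_neg (by omega)] at h1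
      exact hne0 h1
    have hdvd : δ ∣ 1 := Dvd.intro M (by linarith [hMδ])
    have := Int.le_of_dvd (by norm_num) hdvd
    omega
  exact main_core hne u hrel hnz hspan (fun m => by rw [hdlin m, hδ1, mul_one])

theorem pre (hne : ¬(e₁ = 0 ∧ e₂ = 0))
    (u : ℤ → (ℤ →₀ ℂ))
    (hrel : ∀ n m : ℤ, Lbr e₁ e₂ (u n) (u m) = ((m - n : ℤ) : ℂ) • u (n + m))
    (hnz : ∀ m, u m ≠ 0)
    (hspan : ∀ v : ℤ →₀ ℂ, v ∈ Submodule.span ℂ (Set.range u)) : False := by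
  classical
  set p : ℤ := dg (u 0) with hp
  have htop : ∀ j, p < j → u 0 j = 0 := fun j h => apply_eq_zero_of_dg_lt h
  rcases lt_trichotomy p 0 with hplt | hpeq | hpgt
  · -- p < 0 impossible
    have e := eig_coeff u hrel 1 (dg (u 1))
    rw [top_vanish htop (fun j h => apply_eq_zero_of_dg_lt h)
      (by omega : p + dg (u 1) < dg (u 1))] at e
    simp only [Int.cast_one, one_mul] at e
    exact (dg_apply_ne (hnz 1)) e.symm
  · -- p = 0
    have ha : u 0 0 ≠ 0 := by
      have := dg_apply_ne (hnz 0)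
      rwa [← hp, hpeq] at this
    have hE : ∀ m : ℤ, u 0 0 * ((dg (u m) : ℤ) : ℂ) = (m : ℂ) := by
      intro m
      have e := top_slot (e₁ := e₁) (e₂ := e₂) (f := u 0) (g := u m)
        (df := (0:ℤ)) (dgg := dg (u m))
        (fun j h => apply_eq_zero_of_dg_lt (by omega))
        (fun j h => apply_eq_zero_of_dg_lt h)
      rw [zero_add] at e
      rw [eig_coeff u hrel m] at e
      have ham := dg_apply_ne (hnz m)
      have : (m : ℂ) * u m (dg (u m)) = u 0 0 * (((dg (u m) : ℤ) : ℂ)) * u m (dg (u m)) := by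
        rw [e]; push_cast; ring
      exact (mul_right_cancel₀ ham this).symm
    set δ : ℤ := dg (u 1) with hδdef
    have hδ0 : δ ≠ 0 := by
      intro h0
      have := hE 1
      rw [← hδdef, h0] at this
      simp at this
    have hdlin : ∀ m : ℤ, dg (u m) = m * δ := by
      intro m
      have h1 := hE m
      have h2 := hE 1
      rw [← hδdef] at h2
      have : u 0 0 * ((dg (u m) : ℤ) : ℂ) = u 0 0 * ((m * δ : ℤ) : ℂ) := by
        push_cast
        rw [h1]
        push_cast at h2
        linear_combination (-(m : ℂ)) * h2
      have h3 := mul_left_cancel₀ ha this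
      exact_mod_cast h3
    rcases le_or_gt 1 δ with hδ1 | hδ1
    · exact pre2 hne u hrel hnz hspan δ hδ1 hdlin
    · -- δ ≤ -1 : relabel
      have hδm : 1 ≤ -δ := by omega
      set u' : ℤ → (ℤ →₀ ℂ) := fun m => (-1 : ℂ) • u (-m) with hu'
      have huu : ∀ m : ℤ, u m = (-1 : ℂ) • u' (-m) := by
        intro m
        rw [hu']
        simp only [neg_neg]
        rw [smul_smul]
        norm_num
      have hrel' : ∀ n m : ℤ, Lbr e₁ e₂ (u' n) (u' m) = ((m - n : ℤ) : ℂ) • u' (n + m) := by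
        intro n m
        rw [hu']
        simp only
        rw [Lbr_smul_left, Lbr_smul_right, hrel (-n) (-m), smul_smul, smul_smul, smul_smul]
        rw [show -n + -m = -(n+m) by ring]
        congr 1
        push_cast
        ring
      have hnz' : ∀ m, u' m ≠ 0 := fun m => smul_ne_zero' (by norm_num) (hnz (-m))
      have hspan' : ∀ v : ℤ →₀ ℂ, v ∈ Submodule.span ℂ (Set.range u') := by
        intro v
        have hsub : Set.range u ⊆ (Submodule.span ℂ (Set.range u') : Set (ℤ →₀ ℂ)) := by
          rintro _ ⟨m, rfl⟩
          rw [huu m]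
          exact Submodule.smul_mem _ _ (Submodule.subset_span ⟨-m, rfl⟩)
        exact Submodule.span_le.mpr hsub (hspan v)
      have hdlin' : ∀ m : ℤ, dg (u' m) = m * (-δ) := by
        intro m
        rw [hu']
        simp only
        rw [dg_smul (by norm_num), hdlin (-m)]
        ring
      exact pre2 hne u' hrel' hnz' hspan' (-δ) hδm hdlin'
  · -- p > 0
    have hub : ∀ m, dg (u m) ≤ p := by
      intro m
      by_cases hm : m = 0
      · rw [hm]
      by_contra hgt
      push_neg at hgt
      have e := top_slot (e₁ := e₁) (e₂ := e₂) (f := u 0) (g := u m)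
        (df := p) (dgg := dg (u m)) htop (fun j h => apply_eq_zero_of_dg_lt h)
      rw [eig_coeff u hrel m, apply_eq_zero_of_dg_lt (by omega : dg (u m) < p + dg (u m)),
        mul_zero] at e
      have := dg_apply_ne (hnz m)
      rcases mul_eq_zero.mp e.symm with h | h
      · exact (dg_apply_ne (hnz 0)) h
      rcases mul_eq_zero.mp h with h | h
      · exact this h
      · rw [Int.cast_eq_zero] at h
        omega
    exact span_bounded_top u hspan p hub

lemma Wbr_single (n m : ℤ) :
    Wbr (Finsupp.single n 1) (Finsupp.single m 1)
      = ((m - n : ℤ) : ℂ) • Finsupp.single (n + m) 1 := by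
  rw [Wbr]
  rw [Finsupp.sum_single_index (by simp [Finsupp.sum])]
  rw [Finsupp.sum_single_index (by simp)]
  simp

end main
end LW

end

/-- For every `(e₁,e₂) ∈ ℂ²` with `(e₁,e₂) ≠ (0,0)`, the Lie
algebra `L^(e₁,e₂)` is not isomorphic (as a complex Lie algebra) to the
Witt algebra `W`: no ℂ-linear equivalence intertwines the brackets. -/
theorem L_ne_zero_not_iso_Witt (e₁ e₂ : ℂ) (h : (e₁, e₂) ≠ (0, 0)) :
    ¬ ∃ φ : (ℤ →₀ ℂ) ≃ₗ[ℂ] (ℤ →₀ ℂ),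
        ∀ f g : ℤ →₀ ℂ, φ (Lbr e₁ e₂ f g) = Wbr (φ f) (φ g) := by
  rintro ⟨φ, hφ⟩
  set u : ℤ → (ℤ →₀ ℂ) := fun m => φ.symm (Finsupp.single m 1) with hu
  have hne : ¬(e₁ = 0 ∧ e₂ = 0) := by
    rintro ⟨h1, h2⟩
    exact h (by rw [h1, h2])
  have hrel : ∀ n m : ℤ, Lbr e₁ e₂ (u n) (u m) = ((m - n : ℤ) : ℂ) • u (n + m) := by
    intro n m
    apply φ.injective
    have h1 := hφ (u n) (u m)
    rw [hu] at h1 ⊢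
    simp only [LinearEquiv.apply_symm_apply] at h1
    rw [h1, LW.Wbr_single, map_smul, LinearEquiv.apply_symm_apply]
  have hnz : ∀ m : ℤ, u m ≠ 0 := by
    intro m hm
    have := congrArg φ hm
    rw [hu] at this
    simp only [LinearEquiv.apply_symm_apply, map_zero] at this
    exact one_ne_zero (Finsupp.single_eq_zero.mp this)
  have hspan : ∀ v : ℤ →₀ ℂ, v ∈ Submodule.span ℂ (Set.range u) := by
    intro v
    have h3 : ((φ v).sum fun m a => a • u m) = v := by
      calc ((φ v).sum fun m a => a • u m)
          = (φ v).sum (fun m a => φ.symm (Finsupp.single m a)) := by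
            apply Finsupp.sum_congr
            intro m _
            rw [show Finsupp.single m ((φ v) m) = ((φ v) m) • Finsupp.single m (1:ℂ) by
              rw [Finsupp.smul_single', mul_one], map_smul]
        _ = φ.symm ((φ v).sum fun m a => Finsupp.single m a) := (map_finsuppSum _ _ _).symm
        _ = φ.symm (φ v) := by rw [Finsupp.sum_single]
        _ = v := φ.symm_apply_apply v
    have h4 : ((φ v).sum fun m a => a • u m) ∈ Submodule.span ℂ (Set.range u) := by
      rw [Finsupp.sum]
      exact Submodule.sum_mem _ (fun m _ => Submodule.smul_mem _ _ (Submodule.subset_span ⟨m, rfl⟩))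
    rwa [h3] at h4
  exact LW.pre hne u hrel hnz hspan
end

section
/- For every fixed s ∈ ℂ and every e₁ ∈ ℂ with e₁ ≠ 0, the Lie algebra L^(e₁, s·e₁) is isomorphic to L^(1, s); in particular, for any e₁, e₁' ≠ 0 the Lie algebras L^(e₁, s·e₁) and L^(e₁', s·e₁') are isomorphic (the family over the line D_s = {e₂ = s·e₁} is a jump deformation), an isomorphism being given by rescaling the basis elements Vₙ ↦ (√e₁)^{−n} Vₙ. -/
open scoped Classical

/- ### Auxiliary material -/

/-- The diagonal rescaling map `single n a ↦ c n • single n a`. -/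
noncomputable def diagL (c : ℤ → ℂ) : (ℤ →₀ ℂ) →ₗ[ℂ] (ℤ →₀ ℂ) :=
  Finsupp.lsum ℂ fun n => c n • Finsupp.lsingle n

lemma diagL_single (c : ℤ → ℂ) (k : ℤ) (a : ℂ) :
    diagL c (Finsupp.single k a) = c k • Finsupp.single k a := by
  rw [diagL, Finsupp.lsum_single, LinearMap.smul_apply, Finsupp.lsingle_apply]

lemma Lbr_single_single (e₁ e₂ : ℂ) (n m : ℤ) (a b : ℂ) :
    Lbr e₁ e₂ (Finsupp.single n a) (Finsupp.single m b) = (a * b) • Vbr e₁ e₂ n m := by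
  classical
  unfold Lbr
  rw [Finsupp.sum_single_index (by simp)]
  rw [Finsupp.sum_single_index (by simp)]

lemma Lbr_add_left (e₁ e₂ : ℂ) (f f' g : ℤ →₀ ℂ) :
    Lbr e₁ e₂ (f + f') g = Lbr e₁ e₂ f g + Lbr e₁ e₂ f' g := by
  classical
  unfold Lbr
  apply Finsupp.sum_add_index' <;> intros <;> simp [add_mul, add_smul, Finsupp.sum_add]

lemma Lbr_add_right (e₁ e₂ : ℂ) (f g g' : ℤ →₀ ℂ) :
    Lbr e₁ e₂ f (g + g') = Lbr e₁ e₂ f g + Lbr e₁ e₂ f g' := by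
  classical
  unfold Lbr
  rw [← Finsupp.sum_add]
  apply Finsupp.sum_congr
  intro n _
  apply Finsupp.sum_add_index' <;> intros <;> simp [mul_add, add_smul]

lemma Lbr_zero_left (e₁ e₂ : ℂ) (g : ℤ →₀ ℂ) : Lbr e₁ e₂ 0 g = 0 := by
  simp [Lbr]

lemma Lbr_zero_right (e₁ e₂ : ℂ) (f : ℤ →₀ ℂ) : Lbr e₁ e₂ f 0 = 0 := by
  simp [Lbr]

/-- Key computation: rescaling intertwines `Vbr 1 s` with `Vbr e₁ (s*e₁)`. -/
lemma key (s e₁ r : ℂ) (hr0 : r ≠ 0) (hr : r ^ 2 = e₁) (n m : ℤ) :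
    diagL (fun k => r ^ (-k)) (Vbr 1 s n m)
      = (r ^ (-n) * r ^ (-m)) • Vbr e₁ (s * e₁) n m := by
  have he2 : r ^ (2 : ℤ) = e₁ := by
    rw [show (2 : ℤ) = ((2 : ℕ) : ℤ) from rfl, zpow_natCast, hr]
  have h0 : r ^ (-(n + m)) = r ^ (-n) * r ^ (-m) := by
    rw [neg_add, zpow_add₀ hr0]
  have h2 : r ^ (-(n + m - 2)) = e₁ * (r ^ (-n) * r ^ (-m)) := by
    rw [show -(n + m - 2) = (2 : ℤ) + (-n + -m) by ring, zpow_add₀ hr0, zpow_add₀ hr0, he2]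
  have h4 : r ^ (-(n + m - 4)) = e₁ ^ 2 * (r ^ (-n) * r ^ (-m)) := by
    rw [show -(n + m - 4) = ((2 : ℤ) + 2) + (-n + -m) by ring, zpow_add₀ hr0, zpow_add₀ hr0,
      zpow_add₀ hr0, he2]
    ring
  have h0' : r ^ (-(m + n)) = r ^ (-n) * r ^ (-m) := by rw [add_comm]; exact h0
  have h2' : r ^ (-(m + n - 2)) = e₁ * (r ^ (-n) * r ^ (-m)) := by rw [add_comm]; exact h2
  have h4' : r ^ (-(m + n - 4)) = e₁ ^ 2 * (r ^ (-n) * r ^ (-m)) := by rw [add_comm]; exact h4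
  unfold Vbr VbrOE
  split_ifs with hn hm hm <;>
    simp only [map_add, map_smul, map_neg, diagL_single, smul_add, smul_neg, smul_smul]
  · rw [h0]; match_scalars <;> ring
  · rw [h0, h2, h4]; match_scalars <;> ring
  · rw [h0', h2', h4']; match_scalars <;> ring
  · rw [h0, h2, h4]; match_scalars <;> ring

/-- The rescaling equivalence `single n a ↦ r^(-n) • single n a` for `r ≠ 0`. -/
noncomputable def diagE (r : ℂ) (hr0 : r ≠ 0) : (ℤ →₀ ℂ) ≃ₗ[ℂ] (ℤ →₀ ℂ) :=
  LinearEquiv.ofLinear (diagL fun k => r ^ (-k)) (diagL fun k => r ^ k)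
    (by
      apply Finsupp.lhom_ext
      intro k a
      simp only [LinearMap.comp_apply, diagL_single, map_smul, LinearMap.id_apply, smul_smul]
      rw [zpow_neg, mul_inv_cancel₀ (zpow_ne_zero k hr0), one_smul])
    (by
      apply Finsupp.lhom_ext
      intro k a
      simp only [LinearMap.comp_apply, diagL_single, map_smul, LinearMap.id_apply, smul_smul]
      rw [zpow_neg, inv_mul_cancel₀ (zpow_ne_zero k hr0), one_smul])

lemma diagE_apply (r : ℂ) (hr0 : r ≠ 0) (f : ℤ →₀ ℂ) :
    diagE r hr0 f = diagL (fun k => r ^ (-k)) f := rfl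

lemma diagE_hom (s e₁ r : ℂ) (hr0 : r ≠ 0) (hr : r ^ 2 = e₁) (f g : ℤ →₀ ℂ) :
    diagE r hr0 (Lbr 1 s f g) = Lbr e₁ (s * e₁) (diagE r hr0 f) (diagE r hr0 g) := by
  induction f using Finsupp.induction_linear with
  | zero => simp [Lbr_zero_left, diagE_apply, map_zero]
  | add f f' hf hf' =>
      rw [Lbr_add_left, map_add, hf, hf', map_add, Lbr_add_left]
  | single n a =>
      induction g using Finsupp.induction_linear with
      | zero => simp [Lbr_zero_right, diagE_apply, map_zero]
      | add g g' hg hg' =>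
          rw [Lbr_add_right, map_add, hg, hg', map_add, Lbr_add_right]
      | single m b =>
          rw [Lbr_single_single, diagE_apply, map_smul, key s e₁ r hr0 hr,
            diagE_apply, diagE_apply, diagL_single, diagL_single,
            Finsupp.smul_single, Finsupp.smul_single, Lbr_single_single]
          simp only [smul_smul, smul_eq_mul]
          ring_nf

/-- For fixed `s ∈ ℂ` and `e₁ ≠ 0`, the Lie algebra
`L^(e₁, s·e₁)` is isomorphic to `L^(1, s)`, an isomorphism being given by
rescaling the basis elements `Vₙ ↦ (√e₁)^(−n) Vₙ` (where `√e₁` is any fixed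
square root `r` of `e₁`); in particular, for any `e₁, e₁' ≠ 0` the Lie
algebras `L^(e₁, s·e₁)` and `L^(e₁', s·e₁')` are isomorphic (the family over
the line `D_s = {e₂ = s·e₁}` is a jump deformation). -/
theorem L_jump_deformation_on_Ds (s : ℂ) :
    (∀ e₁ : ℂ, e₁ ≠ 0 → ∀ r : ℂ, r ^ 2 = e₁ →
      ∃ φ : (ℤ →₀ ℂ) ≃ₗ[ℂ] (ℤ →₀ ℂ),
        (∀ n : ℤ, φ (Finsupp.single n 1) = r ^ (-n) • Finsupp.single n 1) ∧
        (∀ f g : ℤ →₀ ℂ, φ (Lbr 1 s f g) = Lbr e₁ (s * e₁) (φ f) (φ g))) ∧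
    (∀ e₁ e₁' : ℂ, e₁ ≠ 0 → e₁' ≠ 0 →
      ∃ ψ : (ℤ →₀ ℂ) ≃ₗ[ℂ] (ℤ →₀ ℂ),
        ∀ f g : ℤ →₀ ℂ, ψ (Lbr e₁ (s * e₁) f g) = Lbr e₁' (s * e₁') (ψ f) (ψ g)) := by
  have main : ∀ e₁ : ℂ, e₁ ≠ 0 → ∀ r : ℂ, r ^ 2 = e₁ →
      ∃ φ : (ℤ →₀ ℂ) ≃ₗ[ℂ] (ℤ →₀ ℂ),
        (∀ n : ℤ, φ (Finsupp.single n 1) = r ^ (-n) • Finsupp.single n 1) ∧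
        (∀ f g : ℤ →₀ ℂ, φ (Lbr 1 s f g) = Lbr e₁ (s * e₁) (φ f) (φ g)) := by
    intro e₁ he₁ r hr
    have hr0 : r ≠ 0 := by
      intro h; apply he₁; rw [← hr, h]; ring
    exact ⟨diagE r hr0,
      fun n => by rw [diagE_apply, diagL_single],
      fun f g => diagE_hom s e₁ r hr0 hr f g⟩
  refine ⟨main, ?_⟩
  intro e₁ e₁' he₁ he₁'
  obtain ⟨r, hr⟩ := IsAlgClosed.exists_pow_nat_eq e₁ (n := 2) (by norm_num)
  obtain ⟨r', hr'⟩ := IsAlgClosed.exists_pow_nat_eq e₁' (n := 2) (by norm_num)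
  obtain ⟨φ, -, hφ⟩ := main e₁ he₁ r hr
  obtain ⟨φ', -, hφ'⟩ := main e₁' he₁' r' hr'
  refine ⟨φ.symm.trans φ', fun f g => ?_⟩
  have h1 : f = φ (φ.symm f) := (φ.apply_symm_apply f).symm
  have h2 : g = φ (φ.symm g) := (φ.apply_symm_apply g).symm
  calc (φ.symm.trans φ') (Lbr e₁ (s * e₁) f g)
      = φ' (φ.symm (Lbr e₁ (s * e₁) (φ (φ.symm f)) (φ (φ.symm g)))) := by
        rw [← h1, ← h2]; rfl
    _ = φ' (φ.symm (φ (Lbr 1 s (φ.symm f) (φ.symm g)))) := by rw [hφ]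
    _ = φ' (Lbr 1 s (φ.symm f) (φ.symm g)) := by rw [φ.symm_apply_apply]
    _ = Lbr e₁' (s * e₁') (φ' (φ.symm f)) (φ' (φ.symm g)) := hφ' _ _
    _ = Lbr e₁' (s * e₁') ((φ.symm.trans φ') f) ((φ.symm.trans φ') g) := rfl
end
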